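/- arXiv:2211.09275 — 7 statements merged into one kernel-verified Lean document; each statement's English description precedes it below -/
import Mathlib

section
/- Let M_1, …, M_p be m×n real matrices that are linearly independent, let x_1, …, x_N be vectors in ℝⁿ, and let c ≥ 0 satisfy ∑_{k=1}^{N} x_k x_kᵀ ⪰ c·I in the Loewner order. Then there exists σ > 0 (depending only on M_1, …, M_p) such that for every θ ∈ ℝ^p, ∑_{k=1}^{N} ‖(∑_{i=1}^{p} θ_i M_i) x_k‖² ≥ c·σ²·‖θ‖². Equivalently, the p×p matrix whose (i,j) entry is ∑_{k=1}^{N} (M_i x_k)ᵀ(M_j x_k) satisfies the Loewner bound ⪰ c·σ²·I. -/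
open Matrix

/-- If `M_1, …, M_p` are linearly independent, then there exists `σ > 0` (depending only on
the `M_i`) such that whenever `∑_k x_k x_kᵀ ⪰ c·I` with `c ≥ 0`,
`∑_k ‖(∑_i θ_i M_i) x_k‖² ≥ c·σ²·‖θ‖² for every `θ`. -/
theorem sum_sq_regressor_lower_bound (m n p : ℕ)
    (M : Fin p → Matrix (Fin m) (Fin n) ℝ)
    (hM : ∀ θ : Fin p → ℝ, ∑ i, θ i • M i = 0 → θ = 0) :
    ∃ σ > (0 : ℝ), ∀ (N : ℕ) (x : Fin N → Fin n → ℝ) (c : ℝ), 0 ≤ c →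
      ((∑ k, (Matrix.of fun i j => x k i * x k j : Matrix (Fin n) (Fin n) ℝ))
        - c • (1 : Matrix (Fin n) (Fin n) ℝ)).PosSemidef →
      ∀ θ : Fin p → ℝ,
        ∑ k, ((∑ i, θ i • M i).mulVec (x k)) ⬝ᵥ ((∑ i, θ i • M i).mulVec (x k)) ≥
          c * σ ^ 2 * (θ ⬝ᵥ θ) := by
  classical
  let L : EuclideanSpace ℝ (Fin p) →ₗ[ℝ] EuclideanSpace ℝ (Fin m × Fin n) :=
    { toFun := fun θ => WithLp.toLp 2 (fun q : Fin m × Fin n => (∑ i, θ i • M i) q.1 q.2)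
      map_add' := by
        intro a b
        ext q
        simp [Matrix.sum_apply, add_mul, Finset.sum_add_distrib]
      map_smul' := by
        intro r a
        ext q
        simp [Matrix.sum_apply, Finset.mul_sum, mul_assoc] }
  have hker : LinearMap.ker L = ⊥ := by
    rw [LinearMap.ker_eq_bot']
    intro θ hθ
    have h0 : ∑ i, θ i • M i = 0 := by
      ext i j
      have := congrArg (fun f => f (i, j)) hθ
      simpa [L] using this
    have := hM (fun i => θ i) h0
    ext i
    exact congrFun this i
  obtain ⟨K, hK, hanti⟩ := L.exists_antilipschitzWith hker
  refine ⟨1 / K, by positivity, ?_⟩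
  intro N x c hc hpsd θ
  set A : Matrix (Fin m) (Fin n) ℝ := ∑ i, θ i • M i with hA
  have key : ∀ v : Fin n → ℝ, c * (v ⬝ᵥ v) ≤ ∑ k, (v ⬝ᵥ x k) ^ 2 := by
    intro v
    have h := (posSemidef_iff_dotProduct_mulVec.mp hpsd).2 v
    have hterm : ∀ k, v ⬝ᵥ ((Matrix.of fun i j => x k i * x k j : Matrix (Fin n) (Fin n) ℝ) *ᵥ v)
        = (v ⬝ᵥ x k) ^ 2 := by
      intro k
      simp only [mulVec, dotProduct, of_apply]
      rw [sq, Finset.sum_mul_sum]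
      apply Finset.sum_congr rfl; intro i _
      rw [Finset.mul_sum]
      apply Finset.sum_congr rfl; intro j _
      ring
    have hsum : ((∑ k, (Matrix.of fun i j => x k i * x k j : Matrix (Fin n) (Fin n) ℝ)) *ᵥ v)
        = ∑ k, ((Matrix.of fun i j => x k i * x k j : Matrix (Fin n) (Fin n) ℝ) *ᵥ v) := by
      funext i
      simp [mulVec, dotProduct, Matrix.sum_apply, Finset.sum_mul]
      rw [Finset.sum_comm]
    have hexp : v ⬝ᵥ (((∑ k, (Matrix.of fun i j => x k i * x k j : Matrix (Fin n) (Fin n) ℝ))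
        - c • (1 : Matrix (Fin n) (Fin n) ℝ)) *ᵥ v)
        = (∑ k, (v ⬝ᵥ x k) ^ 2) - c * (v ⬝ᵥ v) := by
      have hdot : v ⬝ᵥ (∑ k, ((Matrix.of fun i j => x k i * x k j : Matrix (Fin n) (Fin n) ℝ) *ᵥ v))
          = ∑ k, v ⬝ᵥ ((Matrix.of fun i j => x k i * x k j : Matrix (Fin n) (Fin n) ℝ) *ᵥ v) := by
        simp only [dotProduct, Finset.sum_apply, Finset.mul_sum]
        rw [Finset.sum_comm]
      rw [sub_mulVec, dotProduct_sub, hsum, hdot]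
      congr 1
      · exact Finset.sum_congr rfl fun k _ => hterm k
      · rw [smul_mulVec, one_mulVec, dotProduct_smul, smul_eq_mul]
    rw [show star v = v from rfl, hexp] at h
    linarith
  set θ' : EuclideanSpace ℝ (Fin p) := (WithLp.equiv 2 (Fin p → ℝ)).symm θ with hθ'
  have hθnorm : (1 / (K:ℝ)) ^ 2 * (θ ⬝ᵥ θ) ≤ ∑ q : Fin m × Fin n, (A q.1 q.2) ^ 2 := by
    have h1 : ‖θ'‖ ≤ K * ‖L θ'‖ := by
      simpa using hanti.le_mul_dist θ' 0
    have h2 : ‖θ'‖ ^ 2 = θ ⬝ᵥ θ := by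
      rw [EuclideanSpace.norm_eq, Real.sq_sqrt (by positivity)]
      simp [dotProduct, sq, θ', WithLp.equiv, Equiv.refl_apply]
    have h3 : ‖L θ'‖ ^ 2 = ∑ q : Fin m × Fin n, (A q.1 q.2) ^ 2 := by
      rw [EuclideanSpace.norm_eq, Real.sq_sqrt (by positivity)]
      simp only [Real.norm_eq_abs, sq_abs]
      apply Finset.sum_congr rfl
      intro q _
      simp [L, hA, θ', WithLp.equiv, Equiv.refl_apply]
    have hKpos : (0:ℝ) < K := hK
    have h4 : ‖θ'‖ ^ 2 ≤ (K:ℝ)^2 * ‖L θ'‖ ^ 2 := by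
      nlinarith [norm_nonneg θ', norm_nonneg (L θ')]
    rw [← h2, ← h3, div_pow, one_pow, div_mul_eq_mul_div, one_mul, div_le_iff₀ (by positivity)]
    nlinarith
  have hmain : ∑ k, (A *ᵥ x k) ⬝ᵥ (A *ᵥ x k) = ∑ i : Fin m, ∑ k, ((fun j => A i j) ⬝ᵥ x k) ^ 2 := by
    rw [Finset.sum_comm]
    apply Finset.sum_congr rfl
    intro k _
    simp [dotProduct, mulVec, sq]
  calc c * (1/(K:ℝ))^2 * (θ ⬝ᵥ θ) ≤ c * ∑ q : Fin m × Fin n, (A q.1 q.2)^2 := by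
        rw [mul_assoc]; exact mul_le_mul_of_nonneg_left hθnorm hc
    _ = ∑ i : Fin m, c * ((fun j => A i j) ⬝ᵥ (fun j => A i j)) := by
        rw [Fintype.sum_prod_type, Finset.mul_sum]
        apply Finset.sum_congr rfl
        intro i _
        simp [dotProduct, sq, Finset.mul_sum]
    _ ≤ ∑ i : Fin m, ∑ k, ((fun j => A i j) ⬝ᵥ x k)^2 :=
        Finset.sum_le_sum fun i _ => key _
    _ = ∑ k, (A *ᵥ x k) ⬝ᵥ (A *ᵥ x k) := hmain.symm
end

section
/- Let (Ω, 𝔽, ℙ) be a probability space, let A ∈ ℝ^{n×n}, F ∈ ℝ^{n×m}, x_0 ∈ ℝⁿ (deterministic), and let w_0, w_1, w_2, … be square-integrable ℝ^m-valued random vectors that are pairwise independent, each with mean zero (𝔼[w_t] = 0), and satisfying 𝔼[⟨v, w_t⟩²] ≥ ε_w·‖v‖² for some ε_w > 0, all t ∈ ℕ and all v ∈ ℝ^m. Define the random process x_{k+1} = A x_k + F w_k. Then for every k ∈ ℕ and every v ∈ ℝⁿ, 𝔼[⟨v, x_k⟩²] ≥ ε_w · ∑_{j=0}^{k-1} ‖Fᵀ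 (Aᵀ)^j v‖². -/
open Matrix MeasureTheory ProbabilityTheory

/-- For the stochastic recursion `x_{k+1} = A x_k + F w_k` driven by pairwise independent,
mean-zero, square-integrable noise with `𝔼[⟨v,w_t⟩²] ≥ ε_w‖v‖²`, one has
`𝔼[⟨v, x_k⟩²] ≥ ε_w · ∑_{j=0}^{k-1} ‖Fᵀ(Aᵀ)^j v‖²`. -/
theorem second_moment_lower_bound {Ω : Type*} [MeasurableSpace Ω]
    (μ : Measure Ω) [IsProbabilityMeasure μ]
    (n m : ℕ) (A : Matrix (Fin n) (Fin n) ℝ) (F : Matrix (Fin n) (Fin m) ℝ)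
    (x0 : Fin n → ℝ) (w : ℕ → Ω → Fin m → ℝ)
    (hL2 : ∀ t i, MemLp (fun ω => w t ω i) 2 μ)
    (hindep : ∀ s t, s ≠ t → IndepFun (w s) (w t) μ)
    (hmean : ∀ t i, ∫ ω, w t ω i ∂μ = 0)
    (εw : ℝ) (hεw : 0 < εw)
    (hvar : ∀ t (v : Fin m → ℝ), ∫ ω, (v ⬝ᵥ w t ω) ^ 2 ∂μ ≥ εw * (v ⬝ᵥ v))
    (x : ℕ → Ω → Fin n → ℝ)
    (hx0 : ∀ ω, x 0 ω = x0)
    (hx : ∀ k ω, x (k + 1) ω = A.mulVec (x k ω) + F.mulVec (w k ω)) :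
    ∀ k (v : Fin n → ℝ),
      ∫ ω, (v ⬝ᵥ x k ω) ^ 2 ∂μ ≥
        εw * ∑ j ∈ Finset.range k,
          (Fᵀ.mulVec ((Aᵀ ^ j).mulVec v)) ⬝ᵥ (Fᵀ.mulVec ((Aᵀ ^ j).mulVec v)) := by
  intro k v
  -- explicit solution of the recursion
  have hexp : ∀ ω, x k ω = (A ^ k).mulVec x0
      + ∑ j ∈ Finset.range k, ((A ^ (k - 1 - j)) * F).mulVec (w j ω) := by
    induction k with
    | zero => intro ω; simp [hx0]
    | succ k ih =>
      intro ω
      rw [hx, ih ω, Matrix.mulVec_add, Finset.sum_range_succ]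
      have h1 : A.mulVec ((A ^ k).mulVec x0) = (A ^ (k + 1)).mulVec x0 := by
        rw [Matrix.mulVec_mulVec, ← pow_succ']
      have h2 : A.mulVec (∑ j ∈ Finset.range k, ((A ^ (k - 1 - j)) * F).mulVec (w j ω))
          = ∑ j ∈ Finset.range k, ((A ^ (k + 1 - 1 - j)) * F).mulVec (w j ω) := by
        have hsum := map_sum A.mulVecLin
          (fun j => ((A ^ (k - 1 - j)) * F).mulVec (w j ω)) (Finset.range k)
        simp only [Matrix.mulVecLin_apply] at hsum
        rw [hsum]
        refine Finset.sum_congr rfl fun j hj => ?_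
        rw [Matrix.mulVec_mulVec, ← Matrix.mul_assoc, ← pow_succ']
        have hjk := Finset.mem_range.mp hj
        have hidx : k - 1 - j + 1 = k + 1 - 1 - j := by omega
        rw [hidx]
      rw [h1, h2]
      simp [add_assoc]
  set c : ℝ := v ⬝ᵥ (A ^ k).mulVec x0 with hc
  set u : ℕ → (Fin m → ℝ) := fun j => Fᵀ.mulVec ((Aᵀ ^ (k - 1 - j)).mulVec v) with hu
  set f : ℕ → Ω → ℝ := fun j ω => u j ⬝ᵥ w j ω with hf
  have hdot : ∀ ω, v ⬝ᵥ x k ω = c + ∑ j ∈ Finset.range k, f j ω := by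
    intro ω
    have hdsum : v ⬝ᵥ (∑ j ∈ Finset.range k, ((A ^ (k - 1 - j)) * F).mulVec (w j ω))
        = ∑ j ∈ Finset.range k, v ⬝ᵥ ((A ^ (k - 1 - j)) * F).mulVec (w j ω) := by
      simp only [dotProduct, Finset.sum_apply, Finset.mul_sum]
      exact Finset.sum_comm
    rw [hexp ω, dotProduct_add, hdsum]
    congr 1
    refine Finset.sum_congr rfl fun j hj => ?_
    rw [Matrix.dotProduct_mulVec]
    congr 1
    show _ = Fᵀ *ᵥ Aᵀ ^ (k - 1 - j) *ᵥ v
    rw [Matrix.mulVec_mulVec, ← Matrix.transpose_pow, ← Matrix.transpose_mul,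
      Matrix.mulVec_transpose]
  -- basic properties of the f j
  have hfL2 : ∀ j, MemLp (f j) 2 μ := by
    intro j
    have : MemLp (fun ω => ∑ i, u j i * w j ω i) 2 μ :=
      memLp_finset_sum _ (fun i _ => (hL2 j i).const_mul (u j i))
    simpa [hf, dotProduct] using this
  have hfmeas : ∀ j, AEStronglyMeasurable (f j) μ := fun j => (hfL2 j).aestronglyMeasurable
  have hfint : ∀ j, Integrable (f j) μ := fun j => (hfL2 j).integrable one_le_two
  have hfmean : ∀ j, ∫ ω, f j ω ∂μ = 0 := by
    intro j
    have : ∫ ω, f j ω ∂μ = ∑ i, ∫ ω, u j i * w j ω i ∂μ := by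
      simp only [hf, dotProduct]
      exact integral_finset_sum _ fun i _ => ((hL2 j i).integrable one_le_two).const_mul _
    rw [this]
    simp [integral_const_mul, hmean]
  have hcross : ∀ i j, i ≠ j → ∫ ω, f i ω * f j ω ∂μ = 0 := by
    intro i j hij
    have hmes : ∀ (a : Fin m → ℝ), Measurable fun y : Fin m → ℝ => a ⬝ᵥ y := by
      intro a
      exact Finset.measurable_sum _ fun i _ => (measurable_pi_apply (X := fun _ : Fin m => ℝ) i).const_mul (a i)
    have hind : IndepFun (f i) (f j) μ :=
      (hindep i j hij).comp (hmes (u i)) (hmes (u j))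
    have := hind.integral_mul_eq_mul_integral (hfmeas i) (hfmeas j)
    calc ∫ ω, f i ω * f j ω ∂μ = ∫ ω, (f i * f j) ω ∂μ := rfl
      _ = (∫ ω, f i ω ∂μ) * ∫ ω, f j ω ∂μ := this
      _ = 0 := by rw [hfmean i, hfmean j, mul_zero]
  have hintmul : ∀ i j, Integrable (fun ω => f i ω * f j ω) μ := by
    intro i j
    rcases eq_or_ne i j with rfl | hij
    · simpa [sq] using (hfL2 i).integrable_sq
    · have hmes : ∀ (a : Fin m → ℝ), Measurable fun y : Fin m → ℝ => a ⬝ᵥ y := by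
        intro a
        exact Finset.measurable_sum _ fun i _ => (measurable_pi_apply (X := fun _ : Fin m => ℝ) i).const_mul (a i)
      have hind : IndepFun (f i) (f j) μ :=
        (hindep i j hij).comp (hmes (u i)) (hmes (u j))
      exact hind.integrable_mul (hfint i) (hfint j)
  -- expand the square
  have hsq : ∀ ω, (v ⬝ᵥ x k ω) ^ 2 = c ^ 2 + (2 * c) * (∑ j ∈ Finset.range k, f j ω)
      + ∑ i ∈ Finset.range k, ∑ j ∈ Finset.range k, f i ω * f j ω := by
    intro ω
    rw [hdot ω, ← Finset.sum_mul_sum]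
    ring
  have hIsum : Integrable (fun ω => ∑ j ∈ Finset.range k, f j ω) μ :=
    integrable_finset_sum _ fun j _ => hfint j
  have hIdsum : Integrable
      (fun ω => ∑ i ∈ Finset.range k, ∑ j ∈ Finset.range k, f i ω * f j ω) μ :=
    integrable_finset_sum _ fun i _ => integrable_finset_sum _ fun j _ => hintmul i j
  have key : ∫ ω, (v ⬝ᵥ x k ω) ^ 2 ∂μ
      = c ^ 2 + ∑ i ∈ Finset.range k, ∑ j ∈ Finset.range k, ∫ ω, f i ω * f j ω ∂μ := by
    calc ∫ ω, (v ⬝ᵥ x k ω) ^ 2 ∂μ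
        = ∫ ω, (c ^ 2 + (2 * c) * (∑ j ∈ Finset.range k, f j ω)
          + ∑ i ∈ Finset.range k, ∑ j ∈ Finset.range k, f i ω * f j ω) ∂μ := by
          exact integral_congr_ae (Filter.Eventually.of_forall hsq)
      _ = (∫ ω, (c ^ 2 + (2 * c) * (∑ j ∈ Finset.range k, f j ω)) ∂μ)
          + ∫ ω, (∑ i ∈ Finset.range k, ∑ j ∈ Finset.range k, f i ω * f j ω) ∂μ := by
          exact integral_add ((integrable_const _).add (hIsum.const_mul _)) hIdsum
      _ = c ^ 2 + ∑ i ∈ Finset.range k, ∑ j ∈ Finset.range k, ∫ ω, f i ω * f j ω ∂μ := by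
          rw [integral_add (integrable_const _) (hIsum.const_mul _), integral_const,
            integral_const_mul, integral_finset_sum _ fun j _ => hfint j]
          have hdd : ∫ ω, (∑ i ∈ Finset.range k, ∑ j ∈ Finset.range k, f i ω * f j ω) ∂μ
              = ∑ i ∈ Finset.range k, ∑ j ∈ Finset.range k, ∫ ω, f i ω * f j ω ∂μ := by
            rw [integral_finset_sum _ fun i _ =>
              integrable_finset_sum _ fun j _ => hintmul i j]
            exact Finset.sum_congr rfl fun i _ =>
              integral_finset_sum _ fun j _ => hintmul i j
          rw [hdd]
          simp [hfmean]
  have hdiag : ∑ i ∈ Finset.range k, ∑ j ∈ Finset.range k, ∫ ω, f i ω * f j ω ∂μ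
      = ∑ i ∈ Finset.range k, ∫ ω, f i ω ^ 2 ∂μ := by
    refine Finset.sum_congr rfl fun i hi => ?_
    rw [Finset.sum_eq_single_of_mem i hi]
    · apply integral_congr_ae
      exact Filter.Eventually.of_forall fun ω => (sq (f i ω)).symm
    · intro j hj hji
      exact hcross i j (Ne.symm hji)
  have hbound : ∑ i ∈ Finset.range k, ∫ ω, f i ω ^ 2 ∂μ
      ≥ εw * ∑ j ∈ Finset.range k, u j ⬝ᵥ u j := by
    rw [Finset.mul_sum]
    exact Finset.sum_le_sum fun j _ => hvar j (u j)
  have hreindex : ∑ j ∈ Finset.range k, u j ⬝ᵥ u j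
      = ∑ j ∈ Finset.range k,
        (Fᵀ.mulVec ((Aᵀ ^ j).mulVec v)) ⬝ᵥ (Fᵀ.mulVec ((Aᵀ ^ j).mulVec v)) := by
    exact Finset.sum_range_reflect
      (fun j => (Fᵀ.mulVec ((Aᵀ ^ j).mulVec v)) ⬝ᵥ (Fᵀ.mulVec ((Aᵀ ^ j).mulVec v))) k
  rw [key, ← hreindex]
  have hc2 : (0:ℝ) ≤ c ^ 2 := sq_nonneg c
  linarith [hdiag, hbound]
end

section
/- Let (Ω, 𝔽, ℙ) be a probability space, let A ∈ ℝ^{n×n}, F ∈ ℝ^{n×m}, x_0 ∈ ℝⁿ (deterministic), and let w_0, w_1, w_2, … be square-integrable ℝ^m-valued random vectors that are pairwise independent, each with mean zero, and satisfying 𝔼[⟨v, w_t⟩²] ≥ ε_w·‖v‖² for some ε_w > 0, all t and all v ∈ ℝ^m. Define x_{k+1} = A x_k + F w_k. If the pair (A, F) is reachable (the controllability matrix [F, AF, …, A^{n-1}F] has rank n), then there exists ε_R > 0 such that for every k ≥ n and every v ∈ ℝⁿ, 𝔼[⟨v, x_k⟩²] ≥ ε_w · ε_R · ‖v‖². -/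
open Matrix MeasureTheory ProbabilityTheory

lemma aux_dot_self_nonneg {N : Type*} [Fintype N] (v : N → ℝ) : 0 ≤ v ⬝ᵥ v :=
  Finset.sum_nonneg fun i _ => mul_self_nonneg (v i)

lemma aux_dot_sum {N ι : Type*} [Fintype N] (s : Finset ι) (v : N → ℝ) (f : ι → N → ℝ) :
    v ⬝ᵥ (∑ j ∈ s, f j) = ∑ j ∈ s, v ⬝ᵥ f j := by
  simp only [dotProduct, Finset.sum_apply, Finset.mul_sum]
  rw [Finset.sum_comm]

lemma aux_mulVec_sum {n' m' ι : Type*} [Fintype n'] (A : Matrix m' n' ℝ) (s : Finset ι)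
    (f : ι → n' → ℝ) : A *ᵥ (∑ j ∈ s, f j) = ∑ j ∈ s, A *ᵥ f j := by
  ext i
  simp only [Matrix.mulVec, dotProduct, Finset.sum_apply, Finset.mul_sum]
  rw [Finset.sum_comm]

lemma aux_quad_lower {n : ℕ} {N : Type*} [Fintype N] (R : Matrix (Fin n) N ℝ)
    (hrank : R.rank = n) :
    ∃ εR > (0 : ℝ), ∀ v : Fin n → ℝ, (v ᵥ* R) ⬝ᵥ (v ᵥ* R) ≥ εR * (v ⬝ᵥ v) := by
  classical
  -- injectivity of v ↦ v ᵥ* R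
  have hinj : Function.Injective (fun v : Fin n → ℝ => v ᵥ* R) := by
    have hrankT : Rᵀ.rank = n := by rw [Matrix.rank_transpose]; exact hrank
    have hker : LinearMap.ker Rᵀ.mulVecLin = ⊥ := by
      have h1 := LinearMap.finrank_range_add_finrank_ker Rᵀ.mulVecLin
      rw [show Module.finrank ℝ (Fin n → ℝ) = n by simp] at h1
      have h2 : Module.finrank ℝ (LinearMap.range Rᵀ.mulVecLin) = n := hrankT
      have : Module.finrank ℝ (LinearMap.ker Rᵀ.mulVecLin) = 0 := by omega
      exact Submodule.finrank_eq_zero.mp this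
    have := LinearMap.ker_eq_bot.mp hker
    intro a b hab
    apply this
    simp only [Matrix.mulVecLin_apply, ← Matrix.vecMul_transpose, Matrix.transpose_transpose]
    exact hab
  rcases Nat.eq_zero_or_pos n with hn | hn
  · refine ⟨1, one_pos, fun v => ?_⟩
    have hv : v ⬝ᵥ v = 0 := by subst hn; simp [dotProduct]
    rw [hv, mul_zero]
    exact aux_dot_self_nonneg _
  · set Q : (Fin n → ℝ) → ℝ := fun v => (v ᵥ* R) ⬝ᵥ (v ᵥ* R) with hQ
    have hQcont : Continuous Q := by
      have h1 : Continuous fun v : Fin n → ℝ => v ᵥ* R :=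
        LinearMap.continuous_of_finiteDimensional R.vecMulLinear
      have h2 : Continuous fun u : N → ℝ => u ⬝ᵥ u := by
        unfold dotProduct
        exact continuous_finset_sum _ fun i _ => (continuous_apply i).mul (continuous_apply i)
      exact h2.comp h1
    set K : Set (Fin n → ℝ) := {v | v ⬝ᵥ v = 1} with hK
    have hKc : IsCompact K := by
      have hclosed : IsClosed K := by
        have : Continuous fun v : Fin n → ℝ => v ⬝ᵥ v := by
          unfold dotProduct
          exact continuous_finset_sum _ fun i _ => (continuous_apply i).mul (continuous_apply i)
        exact isClosed_eq this continuous_const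
      have hsub : K ⊆ Metric.closedBall 0 1 := by
        intro v hv
        rw [Metric.mem_closedBall, dist_zero_right]
        rw [pi_norm_le_iff_of_nonneg (by norm_num)]
        intro i
        rw [Real.norm_eq_abs, abs_le]
        have hsq : v i * v i ≤ 1 := by
          rw [← hv]
          have := Finset.single_le_sum (f := fun j => v j * v j)
            (fun j _ => mul_self_nonneg (v j)) (Finset.mem_univ i)
          exact this
        constructor <;> nlinarith
      exact (isCompact_closedBall (0 : Fin n → ℝ) 1).of_isClosed_subset hclosed hsub
    have hKne : K.Nonempty := by
      refine ⟨Pi.single ⟨0, hn⟩ 1, ?_⟩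
      simp [hK, dotProduct, Pi.single_apply]
    obtain ⟨z, hzK, hzmin⟩ := hKc.exists_isMinOn hKne hQcont.continuousOn
    refine ⟨Q z, ?_, ?_⟩
    · rcases lt_or_eq_of_le (aux_dot_self_nonneg (z ᵥ* R)) with h | h
      · exact h
      · exfalso
        have hz0 : z ᵥ* R = 0 := dotProduct_self_eq_zero.mp h.symm
        have : z = 0 := by
          apply hinj
          simpa using hz0
        rw [this] at hzK
        simp [hK, dotProduct] at hzK
    · intro v
      rcases eq_or_ne (v ⬝ᵥ v) 0 with hv | hv
      · have : v = 0 := dotProduct_self_eq_zero.mp hv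
        rw [hv, this, mul_zero]
        simp only [ge_iff_le]
        exact aux_dot_self_nonneg ((0 : Fin n → ℝ) ᵥ* R)
      · have hvpos : 0 < v ⬝ᵥ v := lt_of_le_of_ne (aux_dot_self_nonneg v) (Ne.symm hv)
        set c := Real.sqrt (v ⬝ᵥ v) with hc
        have hcpos : 0 < c := Real.sqrt_pos.mpr hvpos
        have hc2 : c ^ 2 = v ⬝ᵥ v := Real.sq_sqrt hvpos.le
        set u := c⁻¹ • v with hu
        have huK : u ∈ K := by
          simp only [hK, Set.mem_setOf_eq, hu, smul_dotProduct, dotProduct_smul, smul_eq_mul]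
          field_simp
          nlinarith [hc2]
        have hvc : v = c • u := by
          rw [hu, smul_smul, mul_inv_cancel₀ hcpos.ne', one_smul]
        have hQu : Q v = c ^ 2 * Q u := by
          rw [hvc]
          simp only [hQ, Matrix.smul_vecMul, smul_dotProduct, dotProduct_smul, smul_eq_mul]
          ring
        have := hzmin huK
        calc Q v = c ^ 2 * Q u := hQu
          _ ≥ c ^ 2 * Q z := by
              apply mul_le_mul_of_nonneg_left this (by positivity)
          _ = Q z * (v ⬝ᵥ v) := by rw [hc2]; ring

lemma aux_second_moment {Ω : Type*} [MeasurableSpace Ω] (μ : Measure Ω)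
    [IsProbabilityMeasure μ] (k : ℕ) (c : ℝ) (Y : ℕ → Ω → ℝ)
    (hL2 : ∀ j, MemLp (Y j) 2 μ) (hmean : ∀ j, ∫ ω, Y j ω ∂μ = 0)
    (hind : ∀ i j, i ≠ j → IndepFun (Y i) (Y j) μ) :
    ∫ ω, (c + ∑ j ∈ Finset.range k, Y j ω) ^ 2 ∂μ
      = c ^ 2 + ∑ j ∈ Finset.range k, ∫ ω, (Y j ω) ^ 2 ∂μ := by
  have Int1 : ∀ j, Integrable (Y j) μ := fun j => (hL2 j).integrable one_le_two
  have Intprod : ∀ i j, Integrable (fun ω => Y i ω * Y j ω) μ := by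
    intro i j
    have h : MemLp (Y i • Y j) 1 μ := (hL2 j).smul (hL2 i) (r := 1)
      (hpqr := ⟨by rw [inv_one]; exact ENNReal.inv_two_add_inv_two⟩)
    have := memLp_one_iff_integrable.mp h
    exact (by simpa [Pi.smul_apply, smul_eq_mul] using this : Integrable (Y i * Y j) μ)
  have hS : Integrable (fun ω => ∑ j ∈ Finset.range k, Y j ω) μ :=
    integrable_finset_sum _ fun j _ => Int1 j
  have hD : Integrable (fun ω => ∑ i ∈ Finset.range k, ∑ j ∈ Finset.range k,
      Y i ω * Y j ω) μ :=
    integrable_finset_sum _ fun i _ => integrable_finset_sum _ fun j _ => Intprod i j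
  have key : ∀ ω, (c + ∑ j ∈ Finset.range k, Y j ω) ^ 2
      = c ^ 2 + (2 * c) * (∑ j ∈ Finset.range k, Y j ω)
        + ∑ i ∈ Finset.range k, ∑ j ∈ Finset.range k, Y i ω * Y j ω := by
    intro ω
    rw [← Finset.sum_mul_sum]
    ring
  calc ∫ ω, (c + ∑ j ∈ Finset.range k, Y j ω) ^ 2 ∂μ
      = ∫ ω, (c ^ 2 + (2 * c) * (∑ j ∈ Finset.range k, Y j ω)
          + ∑ i ∈ Finset.range k, ∑ j ∈ Finset.range k, Y i ω * Y j ω) ∂μ := by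
        exact integral_congr_ae (Filter.Eventually.of_forall fun ω => key ω)
    _ = (∫ _ω, c ^ 2 ∂μ) + (∫ ω, (2 * c) * (∑ j ∈ Finset.range k, Y j ω) ∂μ)
        + ∫ ω, (∑ i ∈ Finset.range k, ∑ j ∈ Finset.range k, Y i ω * Y j ω) ∂μ := by
        have hconst : Integrable (fun _ω : Ω => c ^ 2) μ := integrable_const _
        have hmid : Integrable (fun ω => (2 * c) * ∑ j ∈ Finset.range k, Y j ω) μ :=
          hS.const_mul _
        have hadd : Integrable (fun ω => c ^ 2
            + (2 * c) * ∑ j ∈ Finset.range k, Y j ω) μ := hconst.add hmid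
        rw [integral_add hadd hD, integral_add hconst hmid]
    _ = c ^ 2 + 0 + ∑ j ∈ Finset.range k, ∫ ω, (Y j ω) ^ 2 ∂μ := by
        congr 1
        · congr 1
          · simp
          · rw [integral_const_mul, integral_finset_sum _ fun j _ => Int1 j]
            simp [hmean]
        · rw [integral_finset_sum _ fun i _ => integrable_finset_sum _ fun j _ => Intprod i j]
          refine Finset.sum_congr rfl fun i hi => ?_
          rw [integral_finset_sum _ fun j _ => Intprod i j]
          rw [Finset.sum_eq_single_of_mem i hi]
          · congr 1 with ω; ring
          · intro j _ hji
            have h := (hind i j (Ne.symm hji)).integral_mul_eq_mul_integral (Int1 i).1 (Int1 j).1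
            simp only [Pi.mul_apply] at h
            rw [show (∫ a, Y i a * Y j a ∂μ) = integral μ (fun a => (Y i * Y j) a) from rfl]
            simp only [Pi.mul_apply]
            rw [show integral μ (fun a => Y i a * Y j a) = integral μ (Y i * Y j) from rfl, (show integral μ (Y i * Y j) = _ from h),
              hmean i, hmean j, mul_zero]
    _ = c ^ 2 + ∑ j ∈ Finset.range k, ∫ ω, (Y j ω) ^ 2 ∂μ := by ring

/-- For the stochastic recursion `x_{k+1} = A x_k + F w_k` driven by pairwise independent,
mean-zero, square-integrable noise with `𝔼[⟨v,w_t⟩²] ≥ ε_w‖v‖²`, if `(A, F)` is reachable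
then there exists `ε_R > 0` with `𝔼[⟨v, x_k⟩²] ≥ ε_w ε_R ‖v‖²` for all `k ≥ n`. -/
theorem second_moment_lower_bound_of_reachable {Ω : Type*} [MeasurableSpace Ω]
    (μ : Measure Ω) [IsProbabilityMeasure μ]
    (n m : ℕ) (A : Matrix (Fin n) (Fin n) ℝ) (F : Matrix (Fin n) (Fin m) ℝ)
    (x0 : Fin n → ℝ) (w : ℕ → Ω → Fin m → ℝ)
    (hL2 : ∀ t i, MemLp (fun ω => w t ω i) 2 μ)
    (hindep : ∀ s t, s ≠ t → IndepFun (w s) (w t) μ)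
    (hmean : ∀ t i, ∫ ω, w t ω i ∂μ = 0)
    (εw : ℝ) (hεw : 0 < εw)
    (hvar : ∀ t (v : Fin m → ℝ), ∫ ω, (v ⬝ᵥ w t ω) ^ 2 ∂μ ≥ εw * (v ⬝ᵥ v))
    (x : ℕ → Ω → Fin n → ℝ)
    (hx0 : ∀ ω, x 0 ω = x0)
    (hx : ∀ k ω, x (k + 1) ω = A.mulVec (x k ω) + F.mulVec (w k ω))
    (hreach : (Matrix.of fun (i : Fin n) (jk : Fin n × Fin m) =>
        (A ^ (jk.1 : ℕ) * F) i jk.2).rank = n) :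
    ∃ εR > (0 : ℝ), ∀ k, n ≤ k → ∀ v : Fin n → ℝ,
      ∫ ω, (v ⬝ᵥ x k ω) ^ 2 ∂μ ≥ εw * εR * (v ⬝ᵥ v) := by
  classical
  obtain ⟨εR, hεR, hQR⟩ := aux_quad_lower
    (Matrix.of fun (i : Fin n) (jk : Fin n × Fin m) => (A ^ (jk.1 : ℕ) * F) i jk.2) hreach
  refine ⟨εR, hεR, ?_⟩
  intro k hk v
  -- state formula
  have hformula : ∀ K, ∀ ω, x K ω
      = (A ^ K) *ᵥ x0 + ∑ j ∈ Finset.range K, (A ^ (K - 1 - j) * F) *ᵥ w j ω := by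
    intro K
    induction K with
    | zero => intro ω; simp [hx0, Matrix.one_mulVec]
    | succ K ih =>
      intro ω
      have h1 : A *ᵥ (x K ω)
          = (A ^ (K + 1)) *ᵥ x0 + ∑ j ∈ Finset.range K, (A ^ (K - j) * F) *ᵥ w j ω := by
        rw [ih ω, Matrix.mulVec_add, aux_mulVec_sum]
        congr 1
        · rw [Matrix.mulVec_mulVec, ← pow_succ']
        · refine Finset.sum_congr rfl fun j hj => ?_
          have hj' : j < K := Finset.mem_range.mp hj
          have he : K - 1 - j + 1 = K - j := by omega
          rw [Matrix.mulVec_mulVec, ← Matrix.mul_assoc, ← pow_succ', he]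
      have hsum : ∑ j ∈ Finset.range (K + 1), (A ^ (K + 1 - 1 - j) * F) *ᵥ w j ω
          = (∑ j ∈ Finset.range K, (A ^ (K - j) * F) *ᵥ w j ω) + F *ᵥ w K ω := by
        rw [Finset.sum_range_succ, show K + 1 - 1 - K = 0 from by omega, pow_zero, Matrix.one_mul]
        congr 1
      rw [hx, h1, hsum, add_assoc]
  -- dot-product decomposition
  have hdot : ∀ ω, v ⬝ᵥ x k ω
      = v ⬝ᵥ ((A ^ k) *ᵥ x0)
        + ∑ j ∈ Finset.range k, (v ᵥ* (A ^ (k - 1 - j) * F)) ⬝ᵥ w j ω := by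
    intro ω
    rw [hformula k ω, dotProduct_add, aux_dot_sum]
    congr 1
    exact Finset.sum_congr rfl fun j _ => Matrix.dotProduct_mulVec _ _ _
  -- properties of the noise projections
  have hYL2 : ∀ (j : ℕ) (u : Fin m → ℝ), MemLp (fun ω => u ⬝ᵥ w j ω) 2 μ := by
    intro j u
    have h := memLp_finset_sum (μ := μ) (p := 2) Finset.univ
      (f := fun l (ω : Ω) => u l * w j ω l) (fun l _ => (hL2 j l).const_mul (u l))
    simpa [dotProduct] using h
  have hYmean : ∀ (j : ℕ) (u : Fin m → ℝ), ∫ ω, u ⬝ᵥ w j ω ∂μ = 0 := by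
    intro j u
    have : (∫ ω, u ⬝ᵥ w j ω ∂μ) = ∑ l, u l * ∫ ω, w j ω l ∂μ := by
      simp only [dotProduct]
      rw [integral_finset_sum _ fun l _ => ((hL2 j l).integrable one_le_two).const_mul _]
      exact Finset.sum_congr rfl fun l _ => integral_const_mul _ _
    rw [this]
    simp [hmean]
  have hYindep : ∀ (i j : ℕ), i ≠ j → ∀ (u u' : Fin m → ℝ),
      IndepFun (fun ω => u ⬝ᵥ w i ω) (fun ω => u' ⬝ᵥ w j ω) μ := by
    intro i j hij u u'
    have hmeas : ∀ (u : Fin m → ℝ), Measurable (fun z : Fin m → ℝ => u ⬝ᵥ z) := fun u =>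
      Finset.measurable_sum _ fun l _ => (measurable_pi_apply l).const_mul _
    exact (hindep i j hij).comp (hmeas u) (hmeas u')
  -- apply the second-moment identity
  have hmain : ∫ ω, (v ⬝ᵥ x k ω) ^ 2 ∂μ
      = (v ⬝ᵥ ((A ^ k) *ᵥ x0)) ^ 2
        + ∑ j ∈ Finset.range k, ∫ ω, ((v ᵥ* (A ^ (k - 1 - j) * F)) ⬝ᵥ w j ω) ^ 2 ∂μ := by
    have h2 := aux_second_moment μ k (v ⬝ᵥ ((A ^ k) *ᵥ x0))
      (fun j ω => (v ᵥ* (A ^ (k - 1 - j) * F)) ⬝ᵥ w j ω)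
      (fun j => hYL2 j _) (fun j => hYmean j _)
      (fun i j hij => hYindep i j hij _ _)
    rw [← h2]
    exact integral_congr_ae (Filter.Eventually.of_forall fun ω => by simp only [hdot ω])
  -- nonnegativity of each term
  have hterm_nonneg : ∀ j : ℕ,
      0 ≤ ∫ ω, ((v ᵥ* (A ^ (k - 1 - j) * F)) ⬝ᵥ w j ω) ^ 2 ∂μ :=
    fun j => integral_nonneg fun ω => sq_nonneg _
  -- lower bound for the selected terms
  have hterm : ∀ i, i < n →
      ∫ ω, ((v ᵥ* (A ^ (k - 1 - (k - 1 - i)) * F)) ⬝ᵥ w (k - 1 - i) ω) ^ 2 ∂μ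
        ≥ εw * ((v ᵥ* (A ^ i * F)) ⬝ᵥ (v ᵥ* (A ^ i * F))) := by
    intro i hi
    have hik : k - 1 - (k - 1 - i) = i := by omega
    rw [hik]
    exact hvar (k - 1 - i) (v ᵥ* (A ^ i * F))
  -- restrict the sum to the last n terms
  have hchain : ∑ j ∈ Finset.range k,
        ∫ ω, ((v ᵥ* (A ^ (k - 1 - j) * F)) ⬝ᵥ w j ω) ^ 2 ∂μ
      ≥ ∑ i ∈ Finset.range n,
        ∫ ω, ((v ᵥ* (A ^ (k - 1 - (k - 1 - i)) * F)) ⬝ᵥ w (k - 1 - i) ω) ^ 2 ∂μ := by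
    rw [← Finset.sum_image (f := fun j =>
        ∫ ω, ((v ᵥ* (A ^ (k - 1 - j) * F)) ⬝ᵥ w j ω) ^ 2 ∂μ)
      (g := fun i => k - 1 - i) (s := Finset.range n)
      (by
        intro a ha b hb hab
        have ha' : a < n := Finset.mem_range.mp ha
        have hb' : b < n := Finset.mem_range.mp hb
        have hab' : k - 1 - a = k - 1 - b := hab
        omega)]
    refine Finset.sum_le_sum_of_subset_of_nonneg ?_ fun j _ _ => hterm_nonneg j
    intro t ht
    rw [Finset.mem_image] at ht
    obtain ⟨i, hi, rfl⟩ := ht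
    have hi' : i < n := Finset.mem_range.mp hi
    rw [Finset.mem_range]
    omega
  -- identify the quadratic form
  have hQ : ((v ᵥ* Matrix.of fun (i : Fin n) (jk : Fin n × Fin m) =>
        (A ^ (jk.1 : ℕ) * F) i jk.2) ⬝ᵥ (v ᵥ* Matrix.of fun (i : Fin n) (jk : Fin n × Fin m) =>
        (A ^ (jk.1 : ℕ) * F) i jk.2))
      = ∑ i ∈ Finset.range n, (v ᵥ* (A ^ i * F)) ⬝ᵥ (v ᵥ* (A ^ i * F)) := by
    rw [← Fin.sum_univ_eq_sum_range (fun i => (v ᵥ* (A ^ i * F)) ⬝ᵥ (v ᵥ* (A ^ i * F)))]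
    simp only [dotProduct, Fintype.sum_prod_type]
    rfl
  -- final chain
  have hlast : ∑ i ∈ Finset.range n,
        ∫ ω, ((v ᵥ* (A ^ (k - 1 - (k - 1 - i)) * F)) ⬝ᵥ w (k - 1 - i) ω) ^ 2 ∂μ
      ≥ εw * (εR * (v ⬝ᵥ v)) := by
    calc ∑ i ∈ Finset.range n,
        ∫ ω, ((v ᵥ* (A ^ (k - 1 - (k - 1 - i)) * F)) ⬝ᵥ w (k - 1 - i) ω) ^ 2 ∂μ
        ≥ ∑ i ∈ Finset.range n, εw * ((v ᵥ* (A ^ i * F)) ⬝ᵥ (v ᵥ* (A ^ i * F))) :=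
          Finset.sum_le_sum fun i hi => hterm i (Finset.mem_range.mp hi)
      _ = εw * ∑ i ∈ Finset.range n, (v ᵥ* (A ^ i * F)) ⬝ᵥ (v ᵥ* (A ^ i * F)) := by
          rw [Finset.mul_sum]
      _ ≥ εw * (εR * (v ⬝ᵥ v)) := by
          apply mul_le_mul_of_nonneg_left _ hεw.le
          rw [← hQ]
          exact hQR v
  calc ∫ ω, (v ⬝ᵥ x k ω) ^ 2 ∂μ
      = (v ⬝ᵥ ((A ^ k) *ᵥ x0)) ^ 2
        + ∑ j ∈ Finset.range k, ∫ ω, ((v ᵥ* (A ^ (k - 1 - j) * F)) ⬝ᵥ w j ω) ^ 2 ∂μ := hmain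
    _ ≥ ∑ j ∈ Finset.range k, ∫ ω, ((v ᵥ* (A ^ (k - 1 - j) * F)) ⬝ᵥ w j ω) ^ 2 ∂μ := by
        nlinarith [sq_nonneg (v ⬝ᵥ ((A ^ k) *ᵥ x0))]
    _ ≥ ∑ i ∈ Finset.range n,
        ∫ ω, ((v ᵥ* (A ^ (k - 1 - (k - 1 - i)) * F)) ⬝ᵥ w (k - 1 - i) ω) ^ 2 ∂μ := hchain
    _ ≥ εw * (εR * (v ⬝ᵥ v)) := hlast
    _ = εw * εR * (v ⬝ᵥ v) := by ring
end

section
/- (Theorem 1: persistent excitation under linear feedback.) Let n_x, n_u, n_w, p be positive integers, A_0, …, A_p ∈ ℝ^{n_x×n_x}, B_0, …, B_p ∈ ℝ^{n_x×n_u}, K ∈ ℝ^{n_u×n_x}, F ∈ ℝ^{n_x×n_w}, and θ* ∈ ℝ^p. Define A_{K,i} := A_i + B_i K for i = 1, …, p, A_K(θ*) := A_0 + B_0 K + ∑_{i=1}^{p} θ*_i A_{K,i}, and the regressor Φ(x, u) ∈ ℝ^{n_x×p} whose i-th column is A_i x + B_i u. Let (Ω, 𝔽, ℙ) be a probability space and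 let w_0, w_1, … be square-integrable ℝ^{n_w}-valued random vectors that are pairwise independent, each with mean zero, satisfying 𝔼[⟨v, w_t⟩²] ≥ ε_w·‖v‖² for some ε_w > 0, all t and all v. Let x_0 ∈ ℝ^{n_x} be deterministic and x_{t+1} = A_K(θ*) x_t + F w_t. Assume: (i) the pair (A_K(θ*), F) is reachable; (ii) the matrices A_{K,1}, …, A_{K,p} are linearly independent. Then for every integer N_u > n_x there exists ε_Φ > 0 such that for all t ∈ ℕ and all θ ∈ ℝ^p, ∑_{k=t}^{t+N_u-1} 𝔼[‖Φ(x_k, K x_k) θ‖²] ≥ ε_Φ·‖θ‖². -/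
open Matrix MeasureTheory ProbabilityTheory

private lemma memLp_dot {Ω : Type*} [MeasurableSpace Ω] {μ : Measure Ω}
    {nw : ℕ} {g : Ω → Fin nw → ℝ} (hg : ∀ i, MemLp (fun ω => g ω i) 2 μ) (u : Fin nw → ℝ) :
    MemLp (fun ω => u ⬝ᵥ g ω) 2 μ := by
  have h : (fun ω => u ⬝ᵥ g ω) = fun ω => ∑ i, u i * g ω i := rfl
  rw [h]
  exact memLp_finset_sum _ (fun i _ => (hg i).const_mul (u i))

private lemma integrable_mul_of_memLp2 {Ω : Type*} [MeasurableSpace Ω] {μ : Measure Ω}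
    {f g : Ω → ℝ} (hf : MemLp f 2 μ) (hg : MemLp g 2 μ) :
    Integrable (fun ω => f ω * g ω) μ := by
  have h : (fun ω => f ω * g ω)
      = fun ω => ((f ω + g ω)^2 - (f ω)^2 - (g ω)^2) / 2 := by funext ω; ring
  rw [h]
  exact (((hf.add hg).integrable_sq.sub hf.integrable_sq).sub hg.integrable_sq).div_const 2

private lemma integral_sq_const_add_sum {Ω : Type*} [MeasurableSpace Ω] (μ : Measure Ω)
    [IsProbabilityMeasure μ] (n : ℕ) (f : ℕ → Ω → ℝ)
    (hf : ∀ s, MemLp (f s) 2 μ)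
    (hmean : ∀ s, ∫ ω, f s ω ∂μ = 0)
    (hcross : ∀ s s', s ≠ s' → ∫ ω, f s ω * f s' ω ∂μ = 0)
    (a : ℝ) :
    ∫ ω, (a + ∑ s ∈ Finset.range n, f s ω)^2 ∂μ
      = a^2 + ∑ s ∈ Finset.range n, ∫ ω, (f s ω)^2 ∂μ := by
  have hint : ∀ s, Integrable (f s) μ := fun s => (hf s).integrable one_le_two
  have hprod : ∀ s s', Integrable (fun ω => f s ω * f s' ω) μ :=
    fun s s' => integrable_mul_of_memLp2 (hf s) (hf s')
  have hptw : (fun ω => (a + ∑ s ∈ Finset.range n, f s ω)^2)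
      = fun ω => (a^2 + ∑ s ∈ Finset.range n, 2*a*(f s ω))
        + ∑ s ∈ Finset.range n, ∑ s' ∈ Finset.range n, f s ω * f s' ω := by
    funext ω
    rw [← Finset.sum_mul_sum, ← Finset.mul_sum]; ring
  rw [hptw]
  have h1 : Integrable (fun ω => a^2 + ∑ s ∈ Finset.range n, 2*a*(f s ω)) μ :=
    (integrable_const _).add (integrable_finset_sum _ fun s _ => (hint s).const_mul (2*a))
  have h2 : Integrable (fun ω => ∑ s ∈ Finset.range n, ∑ s' ∈ Finset.range n, f s ω * f s' ω) μ :=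
    integrable_finset_sum _ fun s _ => integrable_finset_sum _ fun s' _ => hprod s s'
  rw [integral_add h1 h2, integral_add (integrable_const _)
      (integrable_finset_sum _ fun s _ => (hint s).const_mul (2*a)),
    integral_const, integral_finset_sum _ (fun s _ => (hint s).const_mul (2*a)),
    integral_finset_sum _ (fun s _ => integrable_finset_sum _ fun s' _ => hprod s s')]
  simp only [measure_univ, ENNReal.toReal_one, probReal_univ, one_smul]
  have hz : ∀ s ∈ Finset.range n, ∫ ω, 2*a*(f s ω) ∂μ = 0 := by
    intro s _
    rw [integral_const_mul, hmean s, mul_zero]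
  rw [Finset.sum_congr rfl hz, Finset.sum_const_zero, add_zero]
  congr 1
  refine Finset.sum_congr rfl fun s hs => ?_
  rw [integral_finset_sum _ (fun s' _ => hprod s s')]
  rw [Finset.sum_eq_single_of_mem s hs (fun b _ hb => hcross s b (fun h => hb h.symm))]
  congr 1; funext ω; ring

private lemma pos_quadratic_lower {p : ℕ} (hp : 0 < p) (q : (Fin p → ℝ) → ℝ)
    (hcont : Continuous q) (hpos : ∀ θ : Fin p → ℝ, θ ≠ 0 → 0 < q θ)
    (hhom : ∀ (c : ℝ) (θ : Fin p → ℝ), q (c • θ) = c^2 * q θ) :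
    ∃ ε > (0:ℝ), ∀ θ : Fin p → ℝ, q θ ≥ ε * (θ ⬝ᵥ θ) := by
  set S : Set (Fin p → ℝ) := {θ | θ ⬝ᵥ θ = 1} with hS
  have hdcont : Continuous fun θ : Fin p → ℝ => θ ⬝ᵥ θ := by
    have h : (fun θ : Fin p → ℝ => θ ⬝ᵥ θ) = fun θ => ∑ i, θ i * θ i := rfl
    rw [h]
    exact continuous_finset_sum _ fun i _ => (continuous_apply i).mul (continuous_apply i)
  have hSclosed : IsClosed S := isClosed_eq hdcont continuous_const
  have hSbdd : Bornology.IsBounded S := by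
    refine (Metric.isBounded_closedBall (x := (0 : Fin p → ℝ)) (r := 1)).subset ?_
    intro θ hθ
    have hθ1 : (θ ⬝ᵥ θ) = 1 := hθ
    rw [Metric.mem_closedBall, dist_zero_right]
    rw [pi_norm_le_iff_of_nonneg zero_le_one]
    intro i
    rw [Real.norm_eq_abs, abs_le_one_iff_mul_self_le_one]
    calc θ i * θ i ≤ ∑ j, θ j * θ j :=
          Finset.single_le_sum (fun j _ => mul_self_nonneg (θ j)) (Finset.mem_univ i)
      _ = 1 := hθ1
  have hScompact : IsCompact S := Metric.isCompact_of_isClosed_isBounded hSclosed hSbdd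
  have hSne : S.Nonempty := by
    refine ⟨Pi.single ⟨0, hp⟩ 1, ?_⟩
    show (Pi.single (⟨0, hp⟩ : Fin p) (1:ℝ)) ⬝ᵥ (Pi.single ⟨0, hp⟩ 1) = 1
    simp [dotProduct, Pi.single_apply]
  obtain ⟨θ₀, hθ₀S, hmin⟩ := hScompact.exists_isMinOn hSne hcont.continuousOn
  have hθ₀ne : θ₀ ≠ 0 := by
    intro h
    have h1 : (θ₀ ⬝ᵥ θ₀) = 1 := hθ₀S
    rw [h] at h1; simp [dotProduct] at h1
  refine ⟨q θ₀, hpos θ₀ hθ₀ne, fun θ => ?_⟩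
  by_cases hθ : θ = 0
  · subst hθ
    have h0 : q 0 = 0 := by
      have := hhom 0 0; simpa using this
    simp [h0, dotProduct]
  · have hdpos : 0 < θ ⬝ᵥ θ := by
      rcases lt_or_eq_of_le (Finset.sum_nonneg fun j (_ : j ∈ Finset.univ) =>
        mul_self_nonneg (θ j) : (0:ℝ) ≤ θ ⬝ᵥ θ) with h | h
      · exact h
      · exfalso; apply hθ
        funext i
        have h0 := (Finset.sum_eq_zero_iff_of_nonneg
          (fun j _ => mul_self_nonneg (θ j))).mp h.symm i (Finset.mem_univ i)
        exact mul_self_eq_zero.mp h0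
    set c : ℝ := Real.sqrt (θ ⬝ᵥ θ) with hc
    have hcpos : 0 < c := Real.sqrt_pos.mpr hdpos
    have hc2 : c^2 = θ ⬝ᵥ θ := Real.sq_sqrt hdpos.le
    have hmem : (c⁻¹ • θ) ∈ S := by
      show (c⁻¹ • θ) ⬝ᵥ (c⁻¹ • θ) = 1
      rw [smul_dotProduct, dotProduct_smul, smul_eq_mul, smul_eq_mul, ← mul_assoc]
      rw [← hc2, sq]
      field_simp
    have hqθ : q θ = c^2 * q (c⁻¹ • θ) := by
      rw [← hhom c (c⁻¹ • θ), smul_smul, mul_inv_cancel₀ hcpos.ne', one_smul]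
    rw [hqθ, hc2]
    have hm := hmin hmem
    calc (θ ⬝ᵥ θ) * q (c⁻¹ • θ) ≥ (θ ⬝ᵥ θ) * q θ₀ :=
          mul_le_mul_of_nonneg_left hm hdpos.le
      _ = q θ₀ * (θ ⬝ᵥ θ) := mul_comm _ _

private lemma zero_of_mul_fullRank {nx : ℕ} {m : Type*} [Fintype m]
    (R : Matrix (Fin nx) m ℝ) (hR : R.rank = nx)
    (N : Matrix (Fin nx) (Fin nx) ℝ) (hNR : N * R = 0) : N = 0 := by
  have hrange : LinearMap.range R.mulVecLin = ⊤ := by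
    apply Submodule.eq_top_of_finrank_eq
    rw [← Matrix.rank, hR, Module.finrank_pi, Fintype.card_fin]
  have hv : ∀ y : Fin nx → ℝ, N.mulVec y = 0 := by
    intro y
    have hy : y ∈ LinearMap.range R.mulVecLin := by rw [hrange]; trivial
    obtain ⟨u, hu⟩ := hy
    have h2 : R.mulVecLin u = R.mulVec u := rfl
    rw [← hu, h2, Matrix.mulVec_mulVec, hNR, Matrix.zero_mulVec]
  ext i j
  have h := congrFun (hv (Pi.single j 1)) i
  rw [Matrix.mulVec_single] at h
  simpa using h

/-- Theorem 1 (persistent excitation under linear feedback): for the closed-loop system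
`x_{t+1} = A_K(θ*) x_t + F w_t` with pairwise independent, mean-zero, square-integrable
disturbances satisfying `𝔼[⟨v,w_t⟩²] ≥ ε_w‖v‖²`, if `(A_K(θ*), F)` is reachable and the
matrices `A_{K,i} = A_i + B_i K` are linearly independent, then for every `N_u > n_x` there
exists `ε_Φ > 0` with `∑_{k=t}^{t+N_u-1} 𝔼[‖Φ(x_k, K x_k) θ‖²] ≥ ε_Φ‖θ‖²` for all `t, θ`,
where `Φ(x,u)` is the matrix whose `i`-th column is `A_i x + B_i u`. -/
theorem pe_under_linear_feedback {Ω : Type*} [MeasurableSpace Ω]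
    (μ : Measure Ω) [IsProbabilityMeasure μ]
    (nx nu nw p : ℕ) (hnx : 0 < nx) (hnu : 0 < nu) (hnw : 0 < nw) (hp : 0 < p)
    (A0 : Matrix (Fin nx) (Fin nx) ℝ) (A : Fin p → Matrix (Fin nx) (Fin nx) ℝ)
    (B0 : Matrix (Fin nx) (Fin nu) ℝ) (B : Fin p → Matrix (Fin nx) (Fin nu) ℝ)
    (K : Matrix (Fin nu) (Fin nx) ℝ) (F : Matrix (Fin nx) (Fin nw) ℝ)
    (θs : Fin p → ℝ)
    -- closed-loop dynamics matrix A_K(θ*)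
    (AK : Matrix (Fin nx) (Fin nx) ℝ)
    (hAK : AK = A0 + B0 * K + ∑ i, θs i • (A i + B i * K))
    -- disturbance assumptions
    (w : ℕ → Ω → Fin nw → ℝ)
    (hL2 : ∀ t i, MemLp (fun ω => w t ω i) 2 μ)
    (hindep : ∀ s t, s ≠ t → IndepFun (w s) (w t) μ)
    (hmean : ∀ t i, ∫ ω, w t ω i ∂μ = 0)
    (εw : ℝ) (hεw : 0 < εw)
    (hvar : ∀ t (v : Fin nw → ℝ), ∫ ω, (v ⬝ᵥ w t ω) ^ 2 ∂μ ≥ εw * (v ⬝ᵥ v))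
    -- state trajectory
    (x0 : Fin nx → ℝ) (x : ℕ → Ω → Fin nx → ℝ)
    (hx0 : ∀ ω, x 0 ω = x0)
    (hx : ∀ t ω, x (t + 1) ω = AK.mulVec (x t ω) + F.mulVec (w t ω))
    -- (i) reachability of (A_K(θ*), F)
    (hreach : (Matrix.of fun (i : Fin nx) (jk : Fin nx × Fin nw) =>
        (AK ^ (jk.1 : ℕ) * F) i jk.2).rank = nx)
    -- (ii) linear independence of the A_{K,i} = A_i + B_i K
    (hli : ∀ θ : Fin p → ℝ, ∑ i, θ i • (A i + B i * K) = 0 → θ = 0) :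
    ∀ Nu : ℕ, nx < Nu → ∃ εΦ > (0 : ℝ), ∀ t : ℕ, ∀ θ : Fin p → ℝ,
      ∑ k ∈ Finset.Ico t (t + Nu),
        ∫ ω, ∑ j, (∑ i, θ i *
            ((A i).mulVec (x k ω) + (B i).mulVec (K.mulVec (x k ω))) j) ^ 2 ∂μ ≥
        εΦ * (θ ⬝ᵥ θ) := by
  intro Nu hNu
  -- the matrix M θ = ∑ θ i • (A i + B i K)
  set M : (Fin p → ℝ) → Matrix (Fin nx) (Fin nx) ℝ :=
    fun θ => ∑ i, θ i • (A i + B i * K) with hM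
  -- rewrite of the integrand
  have hMvec : ∀ (θ : Fin p → ℝ) (v : Fin nx → ℝ) (j : Fin nx),
      (∑ i, θ i * ((A i).mulVec v + (B i).mulVec (K.mulVec v)) j)
        = (M θ).mulVec v j := by
    intro θ v j
    calc ∑ i, θ i * ((A i).mulVec v + (B i).mulVec (K.mulVec v)) j
        = ∑ i, θ i * ((A i + B i * K).mulVec v j) := by
          refine Finset.sum_congr rfl fun i _ => ?_
          rw [Pi.add_apply, Matrix.mulVec_mulVec, ← Pi.add_apply, Matrix.add_mulVec]
      _ = ∑ i, θ i * ∑ m, (A i + B i * K) j m * v m := rfl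
      _ = ∑ m, (∑ i, θ i * (A i + B i * K) j m) * v m := by
          simp only [Finset.mul_sum, Finset.sum_mul]
          rw [Finset.sum_comm]
          exact Finset.sum_congr rfl fun m _ => Finset.sum_congr rfl fun i _ => by ring
      _ = (M θ).mulVec v j := by
          simp [hM, Matrix.mulVec, dotProduct, Matrix.sum_apply, Matrix.smul_apply,
            smul_eq_mul, mul_add]
  -- quadratic form
  set q : (Fin p → ℝ) → ℝ :=
    fun θ => εw * ∑ r ∈ Finset.range nx, ∑ j, ∑ l, ((M θ * (AK ^ r * F)) j l)^2 with hq
  -- trajectory formula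
  have hxk : ∀ (k : ℕ) (ω : Ω), x k ω = (AK ^ k).mulVec x0
      + ∑ s ∈ Finset.range k, ((AK ^ (k - 1 - s) * F).mulVec (w s ω)) := by
    intro k
    induction k with
    | zero => intro ω; simp [hx0 ω, Matrix.one_mulVec]
    | succ n ih =>
      intro ω
      rw [hx n ω, ih ω, Matrix.mulVec_add]
      have hsum : AK.mulVec (∑ s ∈ Finset.range n, (AK ^ (n - 1 - s) * F).mulVec (w s ω))
          = ∑ s ∈ Finset.range n, (AK ^ (n - s) * F).mulVec (w s ω) := by
        rw [← Matrix.mulVecLin_apply, map_sum]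
        refine Finset.sum_congr rfl fun s hs => ?_
        rw [Finset.mem_range] at hs
        have hpow : AK * (AK ^ (n - 1 - s) * F) = AK ^ (n - s) * F := by
          rw [← Matrix.mul_assoc, ← pow_succ']
          congr 2
          omega
        rw [Matrix.mulVecLin_apply, Matrix.mulVec_mulVec, hpow]
      rw [hsum, Matrix.mulVec_mulVec, ← pow_succ']
      rw [Finset.sum_range_succ]
      have hidx : ∀ s ∈ Finset.range n,
          (AK ^ (n + 1 - 1 - s) * F).mulVec (w s ω) = (AK ^ (n - s) * F).mulVec (w s ω) := by
        intro s hs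
        norm_num
      rw [Finset.sum_congr rfl hidx]
      have hlast : (AK ^ (n + 1 - 1 - n) * F).mulVec (w n ω) = F.mulVec (w n ω) := by
        have h0 : n + 1 - 1 - n = 0 := by omega
        rw [h0, pow_zero, Matrix.one_mul]
      rw [hlast]
      abel
  -- key probabilistic estimate
  have hkey : ∀ (θ : Fin p → ℝ) (k : ℕ), nx ≤ k →
      (∫ ω, ∑ j, ((M θ).mulVec (x k ω) j)^2 ∂μ) ≥ q θ := by
    intro θ k hnxk
    set N : Matrix (Fin nx) (Fin nx) ℝ := M θ with hN
    set c : Fin nx → ℝ := (N * AK ^ k).mulVec x0 with hcdef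
    set C : ℕ → Matrix (Fin nx) (Fin nw) ℝ := fun s => N * (AK ^ (k - 1 - s) * F) with hCdef
    have hmean2 : ∀ (s : ℕ) (u : Fin nw → ℝ), ∫ ω, u ⬝ᵥ w s ω ∂μ = 0 := by
      intro s u
      have h : (fun ω => u ⬝ᵥ w s ω) = fun ω => ∑ i, u i * w s ω i := rfl
      rw [h, integral_finset_sum _
        (fun i _ => ((hL2 s i).integrable one_le_two).const_mul (u i))]
      refine Finset.sum_eq_zero fun i _ => ?_
      rw [integral_const_mul, hmean s i, mul_zero]
    have hφ : ∀ (u : Fin nw → ℝ), Measurable fun z : Fin nw → ℝ => u ⬝ᵥ z := by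
      intro u
      have h : (fun z : Fin nw → ℝ => u ⬝ᵥ z) = fun z => ∑ i, u i * z i := rfl
      rw [h]
      exact Finset.measurable_sum _ fun i _ => by fun_prop
    have hcross2 : ∀ (s s' : ℕ) (u v : Fin nw → ℝ), s ≠ s' →
        ∫ ω, (u ⬝ᵥ w s ω) * (v ⬝ᵥ w s' ω) ∂μ = 0 := by
      intro s s' u v hss
      have hind : IndepFun (fun ω => u ⬝ᵥ w s ω) (fun ω => v ⬝ᵥ w s' ω) μ :=
        (hindep s s' hss).comp (hφ u) (hφ v)
      have hIu : Integrable (fun ω => u ⬝ᵥ w s ω) μ :=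
        (memLp_dot (hL2 s) u).integrable one_le_two
      have hIv : Integrable (fun ω => v ⬝ᵥ w s' ω) μ :=
        (memLp_dot (hL2 s') v).integrable one_le_two
      have hmul := IndepFun.integral_mul_eq_mul_integral hind hIu.aestronglyMeasurable hIv.aestronglyMeasurable
      have heq : (∫ ω, (u ⬝ᵥ w s ω) * (v ⬝ᵥ w s' ω) ∂μ)
          = integral μ ((fun ω => u ⬝ᵥ w s ω) * fun ω => v ⬝ᵥ w s' ω) := rfl
      rw [heq, hmul]
      have h0 : integral μ (fun ω => u ⬝ᵥ w s ω) = 0 := hmean2 s u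
      rw [h0, zero_mul]
    have hrep : ∀ (ω : Ω) (j : Fin nx), (N.mulVec (x k ω)) j
        = c j + ∑ s ∈ Finset.range k, ((C s) j ⬝ᵥ w s ω) := by
      intro ω j
      rw [hxk k ω, Matrix.mulVec_add, Matrix.mulVec_mulVec]
      have hsum : N.mulVec (∑ s ∈ Finset.range k, (AK ^ (k - 1 - s) * F).mulVec (w s ω))
          = ∑ s ∈ Finset.range k, (C s).mulVec (w s ω) := by
        rw [← Matrix.mulVecLin_apply, map_sum]
        refine Finset.sum_congr rfl fun s _ => ?_
        rw [Matrix.mulVecLin_apply, Matrix.mulVec_mulVec]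
      rw [hsum, Pi.add_apply, Finset.sum_apply]
      rfl
    have hmemT : ∀ j : Fin nx,
        MemLp (fun ω => c j + ∑ s ∈ Finset.range k, ((C s) j ⬝ᵥ w s ω)) 2 μ :=
      fun j => (memLp_const (c j)).add
        (memLp_finset_sum _ fun s _ => memLp_dot (hL2 s) _)
    have hswap : (∫ ω, ∑ j, ((N.mulVec (x k ω)) j)^2 ∂μ)
        = ∑ j, ((c j)^2 + ∑ s ∈ Finset.range k, ∫ ω, ((C s) j ⬝ᵥ w s ω)^2 ∂μ) := by
      have h1 : (fun ω => ∑ j, ((N.mulVec (x k ω)) j)^2)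
          = fun ω => ∑ j, (c j + ∑ s ∈ Finset.range k, ((C s) j ⬝ᵥ w s ω))^2 := by
        funext ω; exact Finset.sum_congr rfl fun j _ => by rw [hrep ω j]
      rw [h1, integral_finset_sum _ fun j _ => (hmemT j).integrable_sq]
      exact Finset.sum_congr rfl fun j _ => integral_sq_const_add_sum μ k _
        (fun s => memLp_dot (hL2 s) _) (fun s => hmean2 s _)
        (fun s s' h => hcross2 s s' _ _ h) (c j)
    rw [ge_iff_le, hswap]
    have hqval : q θ = εw * ∑ r ∈ Finset.range nx, ∑ j, ∑ l, ((N * (AK ^ r * F)) j l)^2 := by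
      rw [hq]
    rw [hqval]
    calc εw * ∑ r ∈ Finset.range nx, ∑ j, ∑ l, ((N * (AK ^ r * F)) j l)^2
        ≤ εw * ∑ r ∈ Finset.range k, ∑ j, ∑ l, ((N * (AK ^ r * F)) j l)^2 := by
          refine mul_le_mul_of_nonneg_left (Finset.sum_le_sum_of_subset_of_nonneg
            (Finset.range_subset_range.mpr hnxk) (fun r _ _ => ?_)) hεw.le
          positivity
      _ = εw * ∑ s ∈ Finset.range k, ∑ j, ∑ l, ((C s) j l)^2 := by
          congr 1
          exact (Finset.sum_range_reflect
            (fun r => ∑ j, ∑ l, ((N * (AK ^ r * F)) j l)^2) k).symm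
      _ = ∑ j, ∑ s ∈ Finset.range k, εw * ((C s) j ⬝ᵥ (C s) j) := by
          have h5 : ∀ s : ℕ, εw * ∑ j, ∑ l, ((C s) j l)^2
              = ∑ j, εw * ((C s) j ⬝ᵥ (C s) j) := by
            intro s
            rw [Finset.mul_sum]
            refine Finset.sum_congr rfl fun j _ => ?_
            congr 1
            exact Finset.sum_congr rfl fun l _ => sq ((C s) j l)
          calc εw * ∑ s ∈ Finset.range k, ∑ j, ∑ l, ((C s) j l)^2
              = ∑ s ∈ Finset.range k, ∑ j, εw * ((C s) j ⬝ᵥ (C s) j) := by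
                rw [Finset.mul_sum]
                exact Finset.sum_congr rfl fun s _ => h5 s
            _ = ∑ j, ∑ s ∈ Finset.range k, εw * ((C s) j ⬝ᵥ (C s) j) := Finset.sum_comm
      _ ≤ ∑ j, ∑ s ∈ Finset.range k, ∫ ω, ((C s) j ⬝ᵥ w s ω)^2 ∂μ := by
          refine Finset.sum_le_sum fun j _ => Finset.sum_le_sum fun s _ => ?_
          exact hvar s ((C s) j)
      _ ≤ ∑ j, ((c j)^2 + ∑ s ∈ Finset.range k, ∫ ω, ((C s) j ⬝ᵥ w s ω)^2 ∂μ) := by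
          refine Finset.sum_le_sum fun j _ => ?_
          exact le_add_of_nonneg_left (sq_nonneg _)
  -- properties of q
  have hqcont : Continuous q := by
    rw [hq]
    apply continuous_const.mul
    refine continuous_finset_sum _ fun r _ => continuous_finset_sum _ fun j _ =>
      continuous_finset_sum _ fun l _ => Continuous.pow ?_ 2
    have h : (fun θ => ((M θ * (AK ^ r * F)) j l))
        = fun θ => ∑ m, (∑ i, θ i * (A i + B i * K) j m) * (AK ^ r * F) m l := by
      funext θ
      simp [hM, Matrix.mul_apply, Matrix.sum_apply, Matrix.smul_apply, smul_eq_mul,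
        Finset.sum_mul, mul_add]
    rw [h]
    exact continuous_finset_sum _ fun m _ =>
      (continuous_finset_sum _ fun i _ => (continuous_apply i).mul continuous_const).mul
        continuous_const
  have hqpos : ∀ θ : Fin p → ℝ, θ ≠ 0 → 0 < q θ := by
    intro θ hθ
    have hnonneg : (0:ℝ) ≤ ∑ r ∈ Finset.range nx, ∑ j, ∑ l, ((M θ * (AK ^ r * F)) j l)^2 := by
      positivity
    rcases lt_or_eq_of_le hnonneg with h | h
    · exact mul_pos hεw h
    · exfalso
      have hzero : ∀ r, r < nx → M θ * (AK ^ r * F) = 0 := by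
        intro r hr
        ext j l
        have h1 := (Finset.sum_eq_zero_iff_of_nonneg (fun r _ => by positivity)).mp h.symm
          r (Finset.mem_range.mpr hr)
        have h2 := (Finset.sum_eq_zero_iff_of_nonneg (fun j _ => by positivity)).mp h1
          j (Finset.mem_univ j)
        have h3 := (Finset.sum_eq_zero_iff_of_nonneg (fun l _ => sq_nonneg _)).mp h2
          l (Finset.mem_univ l)
        simpa using pow_eq_zero_iff two_ne_zero |>.mp h3
      have hMR : M θ * (Matrix.of fun (i : Fin nx) (jk : Fin nx × Fin nw) =>
          (AK ^ (jk.1 : ℕ) * F) i jk.2) = 0 := by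
        ext i jk
        rw [Matrix.zero_apply, Matrix.mul_apply]
        have h4 : ∑ m, M θ i m * (AK ^ (jk.1 : ℕ) * F) m jk.2
            = (M θ * (AK ^ (jk.1 : ℕ) * F)) i jk.2 := (Matrix.mul_apply).symm
        calc ∑ m, M θ i m * (Matrix.of fun (i : Fin nx) (jk : Fin nx × Fin nw) =>
              (AK ^ (jk.1 : ℕ) * F) i jk.2) m jk
            = ∑ m, M θ i m * (AK ^ (jk.1 : ℕ) * F) m jk.2 := rfl
          _ = (M θ * (AK ^ (jk.1 : ℕ) * F)) i jk.2 := h4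
          _ = 0 := by rw [hzero jk.1 jk.1.isLt, Matrix.zero_apply]
      have hMz := zero_of_mul_fullRank _ hreach (M θ) hMR
      exact hθ (hli θ hMz)
  have hMc : ∀ (c : ℝ) (θ : Fin p → ℝ), M (c • θ) = c • M θ := by
    intro c θ
    rw [hM]
    simp only
    rw [Finset.smul_sum]
    refine Finset.sum_congr rfl fun i _ => ?_
    rw [Pi.smul_apply, smul_eq_mul, smul_smul]
  have hqhom : ∀ (c : ℝ) (θ : Fin p → ℝ), q (c • θ) = c^2 * q θ := by
    intro c θ
    rw [hq]
    simp only
    rw [hMc c θ]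
    simp only [Matrix.smul_mul, Matrix.smul_apply, smul_eq_mul, mul_pow]
    simp_rw [← Finset.mul_sum]
    ring
  obtain ⟨ε, hε, hεq⟩ := pos_quadratic_lower hp q hqcont hqpos hqhom
  refine ⟨ε, hε, fun t θ => ?_⟩
  -- the window contains k := t + (Nu - 1) ≥ nx
  set k : ℕ := t + (Nu - 1) with hk
  have hknx : nx ≤ k := by omega
  have hkmem : k ∈ Finset.Ico t (t + Nu) := by
    rw [Finset.mem_Ico]; omega
  have hterm : ∀ m : ℕ,
      (fun m => ∫ ω, ∑ j, (∑ i, θ i *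
          ((A i).mulVec (x m ω) + (B i).mulVec (K.mulVec (x m ω))) j) ^ 2 ∂μ) m
        = ∫ ω, ∑ j, ((M θ).mulVec (x m ω) j)^2 ∂μ := by
    intro m
    simp only []
    congr 1; funext ω
    refine Finset.sum_congr rfl fun j _ => ?_
    rw [hMvec θ (x m ω) j]
  calc ∑ m ∈ Finset.Ico t (t + Nu),
        ∫ ω, ∑ j, (∑ i, θ i *
          ((A i).mulVec (x m ω) + (B i).mulVec (K.mulVec (x m ω))) j) ^ 2 ∂μ
      ≥ ∫ ω, ∑ j, (∑ i, θ i *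
          ((A i).mulVec (x k ω) + (B i).mulVec (K.mulVec (x k ω))) j) ^ 2 ∂μ := by
        refine Finset.single_le_sum (f := fun m => ∫ ω, ∑ j, (∑ i, θ i *
          ((A i).mulVec (x m ω) + (B i).mulVec (K.mulVec (x m ω))) j) ^ 2 ∂μ)
          (fun m _ => ?_) hkmem
        exact integral_nonneg fun ω => Finset.sum_nonneg fun j _ => sq_nonneg _
    _ = ∫ ω, ∑ j, ((M θ).mulVec (x k ω) j)^2 ∂μ := hterm k
    _ ≥ q θ := hkey θ k hknx
    _ ≥ ε * (θ ⬝ᵥ θ) := hεq θ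
end

section
/- Let (Ω, 𝔽, ℙ) be a probability space, A ∈ ℝ^{n×n}, B ∈ ℝ^{n×r}, F ∈ ℝ^{n×m}, and x_0 ∈ ℝⁿ deterministic. Let s_0, s_1, … (ℝ^r-valued) and w_0, w_1, … (ℝ^m-valued) be square-integrable random vectors such that the combined family {s_t}_{t∈ℕ} ∪ {w_t}_{t∈ℕ} is pairwise independent, each has mean zero, 𝔼[⟨u, s_t⟩²] ≥ ε_s·‖u‖² for some ε_s > 0 and all u ∈ ℝ^r, t ∈ ℕ, and 𝔼[⟨v, w_t⟩²] ≥ ε_w·‖v‖² for some ε_w ≥ 0 and all v ∈ ℝ^m, t ∈ ℕ. Define x_{k+1} = A x_k + B s_k + F w_k. Then for every k ∈ ℕ and every v ∈ ℝⁿ, 𝔼[⟨v, x_k⟩²] ≥ ε_s·∑_{j=0}^{k-1} ‖Bᵀ (Aᵀ)^j v‖² + ε_w·∑_{j=0}^{k-1} ‖Fᵀ (Aᵀ)^j v‖². -/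
open Matrix MeasureTheory ProbabilityTheory

lemma second_moment_key {Ω : Type*} [MeasurableSpace Ω] (μ : Measure Ω)
    [IsProbabilityMeasure μ] {ι : Type*} (T : Finset ι) (Z : ι → Ω → ℝ)
    (hL2 : ∀ i ∈ T, MemLp (Z i) 2 μ)
    (hindep : ∀ i ∈ T, ∀ j ∈ T, i ≠ j → IndepFun (Z i) (Z j) μ)
    (hmean : ∀ i ∈ T, ∫ ω, Z i ω ∂μ = 0) (c : ℝ) :
    ∫ ω, (c + ∑ i ∈ T, Z i ω) ^ 2 ∂μ = c ^ 2 + ∑ i ∈ T, ∫ ω, Z i ω ^ 2 ∂μ := by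
  have hint : ∀ i ∈ T, Integrable (Z i) μ := fun i hi => (hL2 i hi).integrable one_le_two
  have hprod : ∀ i ∈ T, ∀ j ∈ T, Integrable (fun ω => Z i ω * Z j ω) μ := by
    intro i hi j hj
    rcases eq_or_ne i j with rfl | hij
    · simpa [pow_two] using (hL2 i hi).integrable_sq
    · exact (hindep i hi j hj hij).integrable_mul (hint i hi) (hint j hj)
  have hS : Integrable (fun ω => ∑ i ∈ T, Z i ω) μ := integrable_finset_sum T hint
  have hS2 : Integrable (fun ω => (∑ i ∈ T, Z i ω) * (∑ j ∈ T, Z j ω)) μ := by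
    have h : (fun ω => (∑ i ∈ T, Z i ω) * (∑ j ∈ T, Z j ω))
        = fun ω => ∑ i ∈ T, ∑ j ∈ T, Z i ω * Z j ω := by
      funext ω; rw [Finset.sum_mul_sum]
    rw [h]
    exact integrable_finset_sum T fun i hi => integrable_finset_sum T fun j hj => hprod i hi j hj
  have hmeansum : ∫ ω, (∑ i ∈ T, Z i ω) ∂μ = 0 := by
    rw [integral_finset_sum T hint]
    exact Finset.sum_eq_zero fun i hi => hmean i hi
  have hS2val : ∫ ω, (∑ i ∈ T, Z i ω) * (∑ j ∈ T, Z j ω) ∂μ = ∑ i ∈ T, ∫ ω, Z i ω ^ 2 ∂μ := by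
    have h : (fun ω => (∑ i ∈ T, Z i ω) * (∑ j ∈ T, Z j ω))
        = fun ω => ∑ i ∈ T, ∑ j ∈ T, Z i ω * Z j ω := by
      funext ω; rw [Finset.sum_mul_sum]
    rw [h, integral_finset_sum T
      (fun i hi => integrable_finset_sum T fun j hj => hprod i hi j hj)]
    refine Finset.sum_congr rfl fun i hi => ?_
    rw [integral_finset_sum T fun j hj => hprod i hi j hj]
    rw [Finset.sum_eq_single_of_mem i hi]
    · simp [pow_two]
    · intro j hj hij
      have h0 := (hindep i hi j hj (Ne.symm hij)).integral_mul_eq_mul_integral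
        (hint i hi).aestronglyMeasurable (hint j hj).aestronglyMeasurable
      calc ∫ a, Z i a * Z j a ∂μ = integral μ (Z i * Z j) := rfl
        _ = 0 := by rw [h0, hmean j hj]; ring
  calc ∫ ω, (c + ∑ i ∈ T, Z i ω) ^ 2 ∂μ
      = ∫ ω, (c ^ 2 + (2 * c * ∑ i ∈ T, Z i ω
          + (∑ i ∈ T, Z i ω) * (∑ j ∈ T, Z j ω))) ∂μ := by
        refine integral_congr_ae (Filter.EventuallyEq.of_eq (funext fun ω => ?_)); ring
    _ = (∫ _ω, c ^ 2 ∂μ) + ∫ ω, (2 * c * ∑ i ∈ T, Z i ω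
          + (∑ i ∈ T, Z i ω) * (∑ j ∈ T, Z j ω)) ∂μ :=
        integral_add (integrable_const _) ((hS.const_mul (2 * c)).add hS2)
    _ = (∫ _ω, c ^ 2 ∂μ) + ((∫ ω, 2 * c * ∑ i ∈ T, Z i ω ∂μ)
          + ∫ ω, (∑ i ∈ T, Z i ω) * (∑ j ∈ T, Z j ω) ∂μ) := by
        rw [integral_add (hS.const_mul (2 * c)) hS2]
    _ = c ^ 2 + ∑ i ∈ T, ∫ ω, Z i ω ^ 2 ∂μ := by
        rw [integral_const_mul, hmeansum, hS2val]
        simp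

lemma sum_disjSum_aux {α β M : Type*} [AddCommMonoid M] (s : Finset α) (t : Finset β)
    (f : α ⊕ β → M) :
    ∑ i ∈ s.disjSum t, f i = (∑ a ∈ s, f (Sum.inl a)) + ∑ b ∈ t, f (Sum.inr b) := by
  rw [← Finset.map_inl_disjUnion_map_inr, Finset.sum_disjUnion, Finset.sum_map,
    Finset.sum_map]
  rfl

lemma measurable_dotProduct_right {d : ℕ} (u : Fin d → ℝ) :
    Measurable (fun y : Fin d → ℝ => u ⬝ᵥ y) := by
  simp only [dotProduct]
  exact Finset.measurable_sum _ fun i _ => (by fun_prop)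

lemma memLp_dotProduct {Ω : Type*} [MeasurableSpace Ω] {μ : Measure Ω} {d : ℕ}
    {f : Ω → Fin d → ℝ} (hf : ∀ i, MemLp (fun ω => f ω i) 2 μ) (u : Fin d → ℝ) :
    MemLp (fun ω => u ⬝ᵥ f ω) 2 μ := by
  have h : (fun ω => u ⬝ᵥ f ω) = fun ω => ∑ i, u i * f ω i := by
    funext ω; simp [dotProduct]
  rw [h]
  exact memLp_finset_sum _ fun i _ => (hf i).const_mul (u i)

lemma integral_dotProduct_zero {Ω : Type*} [MeasurableSpace Ω] {μ : Measure Ω}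
    [IsProbabilityMeasure μ] {d : ℕ} {f : Ω → Fin d → ℝ}
    (hf : ∀ i, MemLp (fun ω => f ω i) 2 μ) (hmean : ∀ i, ∫ ω, f ω i ∂μ = 0)
    (u : Fin d → ℝ) : ∫ ω, u ⬝ᵥ f ω ∂μ = 0 := by
  have h : (fun ω => u ⬝ᵥ f ω) = fun ω => ∑ i, u i * f ω i := by
    funext ω; simp [dotProduct]
  rw [h, integral_finset_sum _
    (fun i _ => ((hf i).integrable one_le_two).const_mul (u i))]
  refine Finset.sum_eq_zero fun i _ => ?_
  rw [integral_const_mul, hmean i, mul_zero]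

lemma indepFun_dotProduct {Ω : Type*} [MeasurableSpace Ω] {μ : Measure Ω}
    {d d' : ℕ} {f : Ω → Fin d → ℝ} {g : Ω → Fin d' → ℝ}
    (h : IndepFun f g μ) (u : Fin d → ℝ) (u' : Fin d' → ℝ) :
    IndepFun (fun ω => u ⬝ᵥ f ω) (fun ω => u' ⬝ᵥ g ω) μ :=
  h.comp (measurable_dotProduct_right u) (measurable_dotProduct_right u')

/-- For the stochastic recursion `x_{k+1} = A x_k + B s_k + F w_k` driven by a combined
pairwise independent, mean-zero, square-integrable family `{s_t} ∪ {w_t}` with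
`𝔼[⟨u,s_t⟩²] ≥ ε_s‖u‖²` and `𝔼[⟨v,w_t⟩²] ≥ ε_w‖v‖²`, one has
`𝔼[⟨v,x_k⟩²] ≥ ε_s ∑_{j<k} ‖Bᵀ(Aᵀ)^j v‖² + ε_w ∑_{j<k} ‖Fᵀ(Aᵀ)^j v‖²`. -/
theorem second_moment_lower_bound_two_inputs {Ω : Type*} [MeasurableSpace Ω]
    (μ : Measure Ω) [IsProbabilityMeasure μ]
    (n r m : ℕ) (A : Matrix (Fin n) (Fin n) ℝ)
    (B : Matrix (Fin n) (Fin r) ℝ) (F : Matrix (Fin n) (Fin m) ℝ)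
    (x0 : Fin n → ℝ)
    (s : ℕ → Ω → Fin r → ℝ) (w : ℕ → Ω → Fin m → ℝ)
    (hsL2 : ∀ t i, MemLp (fun ω => s t ω i) 2 μ)
    (hwL2 : ∀ t i, MemLp (fun ω => w t ω i) 2 μ)
    -- the combined family {s_t} ∪ {w_t} is pairwise independent
    (hss : ∀ t t', t ≠ t' → IndepFun (s t) (s t') μ)
    (hww : ∀ t t', t ≠ t' → IndepFun (w t) (w t') μ)
    (hsw : ∀ t t', IndepFun (s t) (w t') μ)
    (hsmean : ∀ t i, ∫ ω, s t ω i ∂μ = 0)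
    (hwmean : ∀ t i, ∫ ω, w t ω i ∂μ = 0)
    (εs : ℝ) (hεs : 0 < εs)
    (hsvar : ∀ t (u : Fin r → ℝ), ∫ ω, (u ⬝ᵥ s t ω) ^ 2 ∂μ ≥ εs * (u ⬝ᵥ u))
    (εw : ℝ) (hεw : 0 ≤ εw)
    (hwvar : ∀ t (v : Fin m → ℝ), ∫ ω, (v ⬝ᵥ w t ω) ^ 2 ∂μ ≥ εw * (v ⬝ᵥ v))
    (x : ℕ → Ω → Fin n → ℝ)
    (hx0 : ∀ ω, x 0 ω = x0)
    (hx : ∀ k ω, x (k + 1) ω =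
      A.mulVec (x k ω) + B.mulVec (s k ω) + F.mulVec (w k ω)) :
    ∀ k (v : Fin n → ℝ),
      ∫ ω, (v ⬝ᵥ x k ω) ^ 2 ∂μ ≥
        εs * (∑ j ∈ Finset.range k,
          (Bᵀ.mulVec ((Aᵀ ^ j).mulVec v)) ⬝ᵥ (Bᵀ.mulVec ((Aᵀ ^ j).mulVec v))) +
        εw * (∑ j ∈ Finset.range k,
          (Fᵀ.mulVec ((Aᵀ ^ j).mulVec v)) ⬝ᵥ (Fᵀ.mulVec ((Aᵀ ^ j).mulVec v))) := by
  -- explicit linear representation of v ⬝ x k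
  have repr : ∀ k (v : Fin n → ℝ) (ω : Ω), v ⬝ᵥ x k ω =
      v ⬝ᵥ (A ^ k).mulVec x0
      + ∑ j ∈ Finset.range k,
          ((Bᵀ.mulVec ((Aᵀ ^ (k - 1 - j)).mulVec v)) ⬝ᵥ s j ω
            + (Fᵀ.mulVec ((Aᵀ ^ (k - 1 - j)).mulVec v)) ⬝ᵥ w j ω) := by
    intro k
    induction k with
    | zero => intro v ω; simp [hx0]
    | succ k ih =>
      intro v ω
      have hAd : ∀ (M : Matrix (Fin n) (Fin n) ℝ) (y : Fin n → ℝ),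
          v ⬝ᵥ M.mulVec y = (Mᵀ.mulVec v) ⬝ᵥ y := fun M y => by
        rw [dotProduct_mulVec, ← Matrix.mulVec_transpose]
      have hBd : v ⬝ᵥ B.mulVec (s k ω) = (Bᵀ.mulVec v) ⬝ᵥ s k ω := by
        rw [dotProduct_mulVec, ← Matrix.mulVec_transpose]
      have hFd : v ⬝ᵥ F.mulVec (w k ω) = (Fᵀ.mulVec v) ⬝ᵥ w k ω := by
        rw [dotProduct_mulVec, ← Matrix.mulVec_transpose]
      have hpow : ∀ j ∈ Finset.range k,
          (Aᵀ ^ (k - 1 - j)).mulVec (Aᵀ.mulVec v) = (Aᵀ ^ (k - j)).mulVec v := by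
        intro j hj
        have hj' := Finset.mem_range.mp hj
        have he : k - j = (k - 1 - j) + 1 := by omega
        rw [Matrix.mulVec_mulVec, he, pow_succ]
      have hconst : (Aᵀ.mulVec v) ⬝ᵥ (A ^ k).mulVec x0
          = v ⬝ᵥ (A ^ (k + 1)).mulVec x0 := by
        rw [pow_succ', ← Matrix.mulVec_mulVec, hAd]
      rw [hx k ω, dotProduct_add, dotProduct_add, hAd, hBd, hFd, ih (Aᵀ.mulVec v) ω]
      simp only [Nat.add_sub_cancel]
      rw [Finset.sum_range_succ, Nat.sub_self, pow_zero, Matrix.one_mulVec]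
      rw [Finset.sum_congr rfl (fun j hj => by rw [hpow j hj])] at *
      ring_nf
      rw [hconst]
      ring
  intro k v
  -- set up the family for the key lemma
  set u : ℕ → Fin r → ℝ := fun j => Bᵀ.mulVec ((Aᵀ ^ (k - 1 - j)).mulVec v) with hu
  set q : ℕ → Fin m → ℝ := fun j => Fᵀ.mulVec ((Aᵀ ^ (k - 1 - j)).mulVec v) with hq
  set Z : ℕ ⊕ ℕ → Ω → ℝ :=
    Sum.elim (fun j ω => u j ⬝ᵥ s j ω) (fun j ω => q j ⬝ᵥ w j ω) with hZ
  set T : Finset (ℕ ⊕ ℕ) := (Finset.range k).disjSum (Finset.range k) with hT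
  have hL2' : ∀ i ∈ T, MemLp (Z i) 2 μ := by
    rintro (j | j) _
    · exact memLp_dotProduct (hsL2 j) (u j)
    · exact memLp_dotProduct (hwL2 j) (q j)
  have hindep' : ∀ i ∈ T, ∀ i' ∈ T, i ≠ i' → IndepFun (Z i) (Z i') μ := by
    rintro (j | j) _ (j' | j') _ hne
    · exact indepFun_dotProduct (hss j j' (by simpa using hne)) (u j) (u j')
    · exact indepFun_dotProduct (hsw j j') (u j) (q j')
    · exact indepFun_dotProduct (hsw j' j).symm (q j) (u j')
    · exact indepFun_dotProduct (hww j j' (by simpa using hne)) (q j) (q j')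
  have hmean' : ∀ i ∈ T, ∫ ω, Z i ω ∂μ = 0 := by
    rintro (j | j) _
    · exact integral_dotProduct_zero (hsL2 j) (hsmean j) (u j)
    · exact integral_dotProduct_zero (hwL2 j) (hwmean j) (q j)
  have key := second_moment_key μ T Z hL2' hindep' hmean' (v ⬝ᵥ (A ^ k).mulVec x0)
  have hsum : ∀ ω, ∑ i ∈ T, Z i ω
      = ∑ j ∈ Finset.range k, (u j ⬝ᵥ s j ω + q j ⬝ᵥ w j ω) := by
    intro ω
    rw [hT, sum_disjSum_aux, ← Finset.sum_add_distrib]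
    rfl
  have hrepr' : (fun ω => (v ⬝ᵥ x k ω) ^ 2)
      = fun ω => (v ⬝ᵥ (A ^ k).mulVec x0 + ∑ i ∈ T, Z i ω) ^ 2 := by
    funext ω
    rw [hsum ω, repr k v ω]
  have hval : ∫ ω, (v ⬝ᵥ x k ω) ^ 2 ∂μ
      = (v ⬝ᵥ (A ^ k).mulVec x0) ^ 2
        + (∑ j ∈ Finset.range k, ∫ ω, (u j ⬝ᵥ s j ω) ^ 2 ∂μ
          + ∑ j ∈ Finset.range k, ∫ ω, (q j ⬝ᵥ w j ω) ^ 2 ∂μ) := by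
    rw [show ∫ ω, (v ⬝ᵥ x k ω) ^ 2 ∂μ
        = ∫ ω, (v ⬝ᵥ (A ^ k).mulVec x0 + ∑ i ∈ T, Z i ω) ^ 2 ∂μ from by rw [hrepr'],
      key, hT, sum_disjSum_aux]
    rfl
  rw [hval]
  have h1 : ∑ j ∈ Finset.range k, ∫ ω, (u j ⬝ᵥ s j ω) ^ 2 ∂μ
      ≥ εs * ∑ j ∈ Finset.range k, u j ⬝ᵥ u j := by
    rw [Finset.mul_sum]
    exact Finset.sum_le_sum fun j _ => hsvar j (u j)
  have h2 : ∑ j ∈ Finset.range k, ∫ ω, (q j ⬝ᵥ w j ω) ^ 2 ∂μ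
      ≥ εw * ∑ j ∈ Finset.range k, q j ⬝ᵥ q j := by
    rw [Finset.mul_sum]
    exact Finset.sum_le_sum fun j _ => hwvar j (q j)
  have hrefl1 : ∑ j ∈ Finset.range k, u j ⬝ᵥ u j
      = ∑ j ∈ Finset.range k,
          (Bᵀ.mulVec ((Aᵀ ^ j).mulVec v)) ⬝ᵥ (Bᵀ.mulVec ((Aᵀ ^ j).mulVec v)) := by
    simpa only [hu] using Finset.sum_range_reflect
      (fun j => (Bᵀ.mulVec ((Aᵀ ^ j).mulVec v)) ⬝ᵥ (Bᵀ.mulVec ((Aᵀ ^ j).mulVec v))) k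
  have hrefl2 : ∑ j ∈ Finset.range k, q j ⬝ᵥ q j
      = ∑ j ∈ Finset.range k,
          (Fᵀ.mulVec ((Aᵀ ^ j).mulVec v)) ⬝ᵥ (Fᵀ.mulVec ((Aᵀ ^ j).mulVec v)) := by
    simpa only [hq] using Finset.sum_range_reflect
      (fun j => (Fᵀ.mulVec ((Aᵀ ^ j).mulVec v)) ⬝ᵥ (Fᵀ.mulVec ((Aᵀ ^ j).mulVec v))) k
  have hc2 : (0:ℝ) ≤ (v ⬝ᵥ (A ^ k).mulVec x0) ^ 2 := sq_nonneg _
  rw [← hrefl1, ← hrefl2]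
  linarith
end

section
/- (Theorem 2: persistent excitation under linear feedback with injected noise.) Let n_x, n_u, n_w, p be positive integers, A_0, …, A_p ∈ ℝ^{n_x×n_x}, B_0, …, B_p ∈ ℝ^{n_x×n_u}, K ∈ ℝ^{n_u×n_x}, F ∈ ℝ^{n_x×n_w}, and θ* ∈ ℝ^p. Define A_{K,i} := A_i + B_i K, A_K(θ*) := A_0 + B_0 K + ∑_{i=1}^{p} θ*_i A_{K,i}, B(θ*) := B_0 + ∑_{i=1}^{p} θ*_i B_i, and the regressor Φ(x, u) ∈ ℝ^{n_x×p} whose i-th column is A_i x + B_i u. Let (Ω, 𝔽, ℙ) be a probability space and let s_0, s_1, … (ℝ^{n_u}-valued) and w_0, w_1, … (ℝ^{n_w}-valued) be square-integrable random vectors such that the combined family {s_t} ∪ {w_t} is pairwise independent, each has mean zero, 𝔼[⟨u, s_t⟩²] ≥ ε_s·‖u‖² for some ε_s > 0 and all u, t, and each w_t has finite second moments. Let x_0 ∈ ℝ^{n_x} be deterministic, u_t = K x_t + s_t, and x_{t+1} = A_K(θ*) x_t + B(θ*) s_t + F w_t. Assume: (i) the pair (A_K(θ*), B(θ*)) is reachable;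 (ii) the p block matrices [A_{K,i} B_i] ∈ ℝ^{n_x×(n_x+n_u)}, i = 1, …, p, are linearly independent. Then for every integer N_u > n_x there exists ε_Φ > 0 such that for all t ∈ ℕ and all θ ∈ ℝ^p, ∑_{k=t}^{t+N_u-1} 𝔼[‖Φ(x_k, K x_k + s_k) θ‖²] ≥ ε_Φ·‖θ‖². -/
open Matrix MeasureTheory ProbabilityTheory
set_option maxHeartbeats 1000000


section helpers
variable {Ω : Type*} [MeasurableSpace Ω] {μ : Measure Ω} [IsProbabilityMeasure μ]

lemma myIntegrableMul {f g : Ω → ℝ} (hf : MemLp f 2 μ) (hg : MemLp g 2 μ) :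
    Integrable (fun ω => f ω * g ω) μ := by
  have h : MemLp (f • g) 1 μ := hg.smul hf (hpqr := ⟨by
    rw [inv_one]
    rw [ENNReal.inv_two_add_inv_two]
    ⟩)
  rw [memLp_one_iff_integrable] at h
  exact h

lemma myIndepZero {f g : Ω → ℝ} (h : IndepFun f g μ) (hf : AEStronglyMeasurable f μ)
    (hg : AEStronglyMeasurable g μ) (hmf : ∫ ω, f ω ∂μ = 0) :
    ∫ ω, f ω * g ω ∂μ = 0 := by
  have := h.integral_mul_eq_mul_integral hf hg
  simp only [Pi.mul_apply] at this
  rw [show (fun ω => f ω * g ω) = f * g from rfl] at *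
  rw [this]
  simp [hmf]

lemma myExpandSq {ι : Type*} (L : Finset ι) (c : ℝ) (f : ι → Ω → ℝ)
    (hL2 : ∀ l ∈ L, MemLp (f l) 2 μ)
    (hmean : ∀ l ∈ L, ∫ ω, f l ω ∂μ = 0)
    (horth : ∀ l ∈ L, ∀ l' ∈ L, l ≠ l' → ∫ ω, f l ω * f l' ω ∂μ = 0) :
    ∫ ω, (c + ∑ l ∈ L, f l ω) ^ 2 ∂μ = c ^ 2 + ∑ l ∈ L, ∫ ω, (f l ω) ^ 2 ∂μ := by
  have hint : ∀ l ∈ L, Integrable (f l) μ := fun l hl => (hL2 l hl).integrable one_le_two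
  have hmul : ∀ l ∈ L, ∀ l' ∈ L, Integrable (fun ω => f l ω * f l' ω) μ :=
    fun l hl l' hl' => myIntegrableMul (hL2 l hl) (hL2 l' hl')
  have key : ∀ ω, (c + ∑ l ∈ L, f l ω) ^ 2
      = c ^ 2 + ((∑ l ∈ L, 2 * c * f l ω) + ∑ l ∈ L, ∑ l' ∈ L, f l ω * f l' ω) := by
    intro ω
    rw [← Finset.mul_sum, ← Finset.sum_mul_sum]
    ring
  simp_rw [key]
  have int1 : Integrable (fun ω => ∑ l ∈ L, 2 * c * f l ω) μ :=
    integrable_finset_sum _ fun l hl => ((hint l hl).const_mul _)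
  have int2 : Integrable (fun ω => ∑ l ∈ L, ∑ l' ∈ L, f l ω * f l' ω) μ :=
    integrable_finset_sum _ fun l hl => integrable_finset_sum _ fun l' hl' => hmul l hl l' hl'
  rw [show (fun ω => c ^ 2 + (∑ l ∈ L, 2 * c * f l ω + ∑ l ∈ L, ∑ l' ∈ L, f l ω * f l' ω))
      = (fun _ => c^2) + ((fun ω => ∑ l ∈ L, 2 * c * f l ω) + (fun ω => ∑ l ∈ L, ∑ l' ∈ L, f l ω * f l' ω)) from rfl,
    integral_add' (integrable_const _) (int1.add int2), integral_const, integral_add' int1 int2,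
    integral_finset_sum _ (fun l hl => (hint l hl).const_mul _),
    integral_finset_sum _ (fun l hl => integrable_finset_sum _ fun l' hl' => hmul l hl l' hl')]
  have e1 : ∑ l ∈ L, ∫ ω, 2 * c * f l ω ∂μ = 0 := by
    refine Finset.sum_eq_zero fun l hl => ?_
    rw [integral_const_mul, hmean l hl, mul_zero]
  have e2 : ∀ l ∈ L, ∫ ω, ∑ l' ∈ L, f l ω * f l' ω ∂μ = ∫ ω, (f l ω) ^ 2 ∂μ := by
    intro l hl
    rw [integral_finset_sum _ (fun l' hl' => hmul l hl l' hl')]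
    rw [Finset.sum_eq_single_of_mem l hl (fun l' hl' hne => horth l hl l' hl' (Ne.symm hne))]
    simp_rw [← pow_two]
  rw [e1, Finset.sum_congr rfl e2]
  simp

lemma myMemL2MulVec {a b : Type*} [Fintype b] (C : Matrix a b ℝ) (z : Ω → b → ℝ)
    (hz : ∀ i, MemLp (fun ω => z ω i) 2 μ) (j : a) :
    MemLp (fun ω => C.mulVec (z ω) j) 2 μ := by
  simp only [Matrix.mulVec, dotProduct]
  exact memLp_finset_sum _ (fun i _ => (hz i).const_mul _)

lemma myMeanZeroMulVec {a b : Type*} [Fintype b] (C : Matrix a b ℝ) (z : Ω → b → ℝ)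
    (hz : ∀ i, MemLp (fun ω => z ω i) 2 μ) (hzm : ∀ i, ∫ ω, z ω i ∂μ = 0) (j : a) :
    ∫ ω, C.mulVec (z ω) j ∂μ = 0 := by
  simp only [Matrix.mulVec, dotProduct]
  rw [integral_finset_sum _ (fun i _ => ((hz i).integrable one_le_two).const_mul _)]
  refine Finset.sum_eq_zero fun i _ => ?_
  rw [integral_const_mul, hzm i, mul_zero]

lemma myOrthMulVec {a b a' b' : Type*} [Fintype b] [Fintype b']
    (C : Matrix a b ℝ) (D : Matrix a' b' ℝ) (z : Ω → b → ℝ) (z' : Ω → b' → ℝ)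
    (hz : ∀ i, MemLp (fun ω => z ω i) 2 μ) (hz' : ∀ i, MemLp (fun ω => z' ω i) 2 μ)
    (hzm : ∀ i, ∫ ω, z ω i ∂μ = 0)
    (hind : ∀ i i', IndepFun (fun ω => z ω i) (fun ω => z' ω i') μ) (j : a) (j' : a') :
    ∫ ω, C.mulVec (z ω) j * D.mulVec (z' ω) j' ∂μ = 0 := by
  simp only [Matrix.mulVec, dotProduct, Finset.sum_mul_sum]
  rw [integral_finset_sum _ (fun i _ => ?_)]
  · refine Finset.sum_eq_zero fun i _ => ?_
    rw [integral_finset_sum _ (fun i' _ => ?_)]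
    · refine Finset.sum_eq_zero fun i' _ => ?_
      have h0 : ∫ ω, z ω i * z' ω i' ∂μ = 0 :=
        myIndepZero (hind i i') (hz i).aestronglyMeasurable (hz' i').aestronglyMeasurable (hzm i)
      have : (fun ω => C j i * z ω i * (D j' i' * z' ω i'))
          = fun ω => (C j i * D j' i') * (z ω i * z' ω i') := by funext ω; ring
      rw [this, integral_const_mul, h0, mul_zero]
    · have : (fun ω => C j i * z ω i * (D j' i' * z' ω i'))
          = fun ω => (C j i * D j' i') * (z ω i * z' ω i') := by funext ω; ring
      rw [this]
      exact (myIntegrableMul (hz i) (hz' i')).const_mul _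
  · exact integrable_finset_sum _ (fun i' _ => by
      have : (fun ω => C j i * z ω i * (D j' i' * z' ω i'))
          = fun ω => (C j i * D j' i') * (z ω i * z' ω i') := by funext ω; ring
      rw [this]
      exact (myIntegrableMul (hz i) (hz' i')).const_mul _)

end helpers

noncomputable def frobSq {m n : Type*} [Fintype m] [Fintype n] (C : Matrix m n ℝ) : ℝ :=
  ∑ j, C j ⬝ᵥ C j

lemma frobSq_nonneg {m n : Type*} [Fintype m] [Fintype n] (C : Matrix m n ℝ) :
    0 ≤ frobSq C := by
  refine Finset.sum_nonneg fun j _ => Finset.sum_nonneg fun i _ => mul_self_nonneg _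

lemma frobSq_eq_zero {m n : Type*} [Fintype m] [Fintype n] {C : Matrix m n ℝ}
    (h : frobSq C = 0) : C = 0 := by
  ext j i
  have h1 : ∀ j' ∈ Finset.univ, (0:ℝ) ≤ C j' ⬝ᵥ C j' :=
    fun j' _ => Finset.sum_nonneg fun i _ => mul_self_nonneg _
  have h2 := (Finset.sum_eq_zero_iff_of_nonneg h1).1 h j (Finset.mem_univ j)
  have h3 : ∀ i' ∈ Finset.univ, (0:ℝ) ≤ C j i' * C j i' := fun i' _ => mul_self_nonneg _
  have h4 := (Finset.sum_eq_zero_iff_of_nonneg h3).1 h2 i (Finset.mem_univ i)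
  simpa [mul_self_eq_zero] using h4

lemma frobSq_smul {m n : Type*} [Fintype m] [Fintype n] (r : ℝ) (C : Matrix m n ℝ) :
    frobSq (r • C) = r ^ 2 * frobSq C := by
  unfold frobSq
  simp only [Finset.mul_sum, dotProduct, Matrix.smul_apply, smul_eq_mul]
  refine Finset.sum_congr rfl fun j _ => Finset.sum_congr rfl fun i _ => by ring

lemma cont_frobSq_sum {p : ℕ} {a b : Type*} [Fintype a] [Fintype b]
    (C : Fin p → Matrix a b ℝ) :
    Continuous fun θ : Fin p → ℝ => frobSq (∑ i, θ i • C i) := by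
  unfold frobSq
  simp only [dotProduct, Matrix.sum_apply, Matrix.smul_apply, smul_eq_mul]
  fun_prop

lemma myFullRank {n m : Type*} [Fintype n] [Fintype m] [DecidableEq n] [DecidableEq m]
    (R : Matrix n m ℝ) (h : R.rank = Fintype.card n) (v : n → ℝ)
    (hv : Rᵀ.mulVec v = 0) : v = 0 := by
  have h1 : Rᵀ.rank = Fintype.card n := by rw [Matrix.rank_transpose]; exact h
  have h2 := LinearMap.finrank_range_add_finrank_ker (Rᵀ.mulVecLin)
  rw [show Module.finrank ℝ ↥(LinearMap.range Rᵀ.mulVecLin) = Rᵀ.rank from rfl, h1,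
    Module.finrank_fintype_fun_eq_card] at h2
  have h3 : Module.finrank ℝ ↥(LinearMap.ker Rᵀ.mulVecLin) = 0 := by omega
  rw [Submodule.finrank_eq_zero] at h3
  have h4 : v ∈ LinearMap.ker Rᵀ.mulVecLin := by
    rw [LinearMap.mem_ker]; exact hv
  rw [h3] at h4
  simpa using h4

lemma sum_mulVec' {ι a b : Type*} [Fintype b] (t : Finset ι) (M : ι → Matrix a b ℝ)
    (v : b → ℝ) : (∑ i ∈ t, M i).mulVec v = ∑ i ∈ t, (M i).mulVec v := by
  ext j
  simp [Matrix.mulVec, dotProduct, Matrix.sum_apply, Finset.sum_mul, Finset.sum_apply]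
  exact Finset.sum_comm

lemma mulVec_sumVec {ι a b : Type*} [Fintype b] (t : Finset ι) (C : Matrix a b ℝ)
    (v : ι → b → ℝ) : C.mulVec (∑ i ∈ t, v i) = ∑ i ∈ t, C.mulVec (v i) := by
  ext j
  simp [Matrix.mulVec, dotProduct, Finset.sum_apply, Finset.mul_sum]
  exact Finset.sum_comm

/-- Theorem 2 (persistent excitation under linear feedback with injected noise): for the
closed-loop system `x_{t+1} = A_K(θ*) x_t + B(θ*) s_t + F w_t` with `u_t = K x_t + s_t`,
where the combined family `{s_t} ∪ {w_t}` is pairwise independent, mean zero and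
square-integrable, and `𝔼[⟨u,s_t⟩²] ≥ ε_s‖u‖²`, if `(A_K(θ*), B(θ*))` is reachable and the
block matrices `[A_{K,i} B_i]` are linearly independent, then for every `N_u > n_x` there
exists `ε_Φ > 0` with `∑_{k=t}^{t+N_u-1} 𝔼[‖Φ(x_k, K x_k + s_k) θ‖²] ≥ ε_Φ‖θ‖²`. -/
theorem pe_under_linear_feedback_with_noise {Ω : Type*} [MeasurableSpace Ω]
    (μ : Measure Ω) [IsProbabilityMeasure μ]
    (nx nu nw p : ℕ) (hnx : 0 < nx) (hnu : 0 < nu) (hnw : 0 < nw) (hp : 0 < p)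
    (A0 : Matrix (Fin nx) (Fin nx) ℝ) (A : Fin p → Matrix (Fin nx) (Fin nx) ℝ)
    (B0 : Matrix (Fin nx) (Fin nu) ℝ) (B : Fin p → Matrix (Fin nx) (Fin nu) ℝ)
    (K : Matrix (Fin nu) (Fin nx) ℝ) (F : Matrix (Fin nx) (Fin nw) ℝ)
    (θs : Fin p → ℝ)
    -- closed-loop matrices A_K(θ*) and B(θ*)
    (AK : Matrix (Fin nx) (Fin nx) ℝ)
    (hAK : AK = A0 + B0 * K + ∑ i, θs i • (A i + B i * K))
    (Bθ : Matrix (Fin nx) (Fin nu) ℝ)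
    (hBθ : Bθ = B0 + ∑ i, θs i • B i)
    -- injected noise and disturbance assumptions
    (s : ℕ → Ω → Fin nu → ℝ) (w : ℕ → Ω → Fin nw → ℝ)
    (hsL2 : ∀ t i, MemLp (fun ω => s t ω i) 2 μ)
    (hwL2 : ∀ t i, MemLp (fun ω => w t ω i) 2 μ)
    -- the combined family {s_t} ∪ {w_t} is pairwise independent
    (hss : ∀ t t', t ≠ t' → IndepFun (s t) (s t') μ)
    (hww : ∀ t t', t ≠ t' → IndepFun (w t) (w t') μ)
    (hsw : ∀ t t', IndepFun (s t) (w t') μ)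
    (hsmean : ∀ t i, ∫ ω, s t ω i ∂μ = 0)
    (hwmean : ∀ t i, ∫ ω, w t ω i ∂μ = 0)
    (εs : ℝ) (hεs : 0 < εs)
    (hsvar : ∀ t (u : Fin nu → ℝ), ∫ ω, (u ⬝ᵥ s t ω) ^ 2 ∂μ ≥ εs * (u ⬝ᵥ u))
    -- state trajectory and input u_t = K x_t + s_t
    (x0 : Fin nx → ℝ) (x : ℕ → Ω → Fin nx → ℝ) (u : ℕ → Ω → Fin nu → ℝ)
    (hx0 : ∀ ω, x 0 ω = x0)
    (hu : ∀ t ω, u t ω = K.mulVec (x t ω) + s t ω)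
    (hx : ∀ t ω, x (t + 1) ω =
      AK.mulVec (x t ω) + Bθ.mulVec (s t ω) + F.mulVec (w t ω))
    -- (i) reachability of (A_K(θ*), B(θ*))
    (hreach : (Matrix.of fun (i : Fin nx) (jk : Fin nx × Fin nu) =>
        (AK ^ (jk.1 : ℕ) * Bθ) i jk.2).rank = nx)
    -- (ii) linear independence of the block matrices [A_{K,i}  B_i]
    (hli : ∀ θ : Fin p → ℝ,
      ∑ i, θ i • Matrix.fromCols (A i + B i * K) (B i) = 0 → θ = 0) :
    ∀ Nu : ℕ, nx < Nu → ∃ εΦ > (0 : ℝ), ∀ t : ℕ, ∀ θ : Fin p → ℝ,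
      ∑ k ∈ Finset.Ico t (t + Nu),
        ∫ ω, ∑ j, (∑ i, θ i *
            ((A i).mulVec (x k ω) + (B i).mulVec (u k ω)) j) ^ 2 ∂μ ≥
        εΦ * (θ ⬝ᵥ θ) := by

  intro Nu hNu
  -- abbreviations
  set Mf : (Fin p → ℝ) → Matrix (Fin nx) (Fin nx) ℝ :=
    fun θ => ∑ i, θ i • (A i + B i * K) with hMf
  set Nf : (Fin p → ℝ) → Matrix (Fin nx) (Fin nu) ℝ :=
    fun θ => ∑ i, θ i • B i with hNf
  set q : (Fin p → ℝ) → ℝ :=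
    fun θ => frobSq (Nf θ) + ∑ d ∈ Finset.range nx, frobSq (Mf θ * (AK ^ d * Bθ)) with hqdef
  have hq_eq : ∀ (θ : Fin p → ℝ) (d : ℕ),
      Mf θ * (AK ^ d * Bθ) = ∑ i, θ i • ((A i + B i * K) * (AK ^ d * Bθ)) := by
    intro θ d
    show (∑ i, θ i • (A i + B i * K)) * (AK ^ d * Bθ) = _
    rw [Matrix.sum_mul]
    exact Finset.sum_congr rfl fun i _ => Matrix.smul_mul _ _ _
  -- state decomposition
  have hxdec : ∀ k ω, x k ω = (AK ^ k).mulVec x0 +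
      ∑ j ∈ Finset.range k, ((AK ^ (k - 1 - j) * Bθ).mulVec (s j ω)
        + (AK ^ (k - 1 - j) * F).mulVec (w j ω)) := by
    intro k
    induction k with
    | zero => intro ω; simp [hx0 ω]
    | succ k ih =>
      intro ω
      rw [hx k ω, ih ω, Finset.sum_range_succ]
      rw [Matrix.mulVec_add, mulVec_sumVec]
      simp only [Matrix.mulVec_add, Matrix.mulVec_mulVec, ← Matrix.mul_assoc, ← pow_succ']
      have e1 : ∀ j ∈ Finset.range k,
          (AK ^ (k - 1 - j + 1) * Bθ).mulVec (s j ω) + (AK ^ (k - 1 - j + 1) * F).mulVec (w j ω)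
          = (AK ^ (k + 1 - 1 - j) * Bθ).mulVec (s j ω) + (AK ^ (k + 1 - 1 - j) * F).mulVec (w j ω) := by
        intro j hj
        rw [Finset.mem_range] at hj
        have : k - 1 - j + 1 = k + 1 - 1 - j := by omega
        rw [this]
      rw [Finset.sum_congr rfl e1]
      have e2 : k + 1 - 1 - k = 0 := by omega
      rw [e2]
      simp [Matrix.mulVec_add]
      abel
  -- the regressor vector in linear form
  have lin1 : ∀ (θ : Fin p → ℝ) (v : Fin nx → ℝ) (z : Fin nu → ℝ),
      (Mf θ).mulVec v + (Nf θ).mulVec z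
        = fun j => ∑ i, θ i * ((A i).mulVec v + (B i).mulVec (K.mulVec v + z)) j := by
    intro θ v z
    show (∑ i, θ i • (A i + B i * K)).mulVec v + (∑ i, θ i • B i).mulVec z = _
    rw [sum_mulVec', sum_mulVec']
    funext j
    simp only [Pi.add_apply, Finset.sum_apply]
    rw [← Finset.sum_add_distrib]
    refine Finset.sum_congr rfl fun i _ => ?_
    simp only [smul_mulVec, Pi.smul_apply, smul_eq_mul, ← mul_add]
    congr 1
    have : (A i + B i * K) *ᵥ v = A i *ᵥ v + B i *ᵥ (K *ᵥ v) := by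
      rw [Matrix.add_mulVec, ← Matrix.mulVec_mulVec]
    rw [this, Matrix.mulVec_add]
    simp only [Pi.add_apply]
    ring
  -- nonnegativity of each summand
  have hnn : ∀ (θ : Fin p → ℝ) (k : ℕ),
      0 ≤ ∫ ω, ∑ j, (∑ i, θ i *
        ((A i).mulVec (x k ω) + (B i).mulVec (u k ω)) j) ^ 2 ∂μ :=
    fun θ k => integral_nonneg fun ω => Finset.sum_nonneg fun j _ => sq_nonneg _
  -- the key per-time-step lower bound
  have hkey : ∀ (θ : Fin p → ℝ) (k : ℕ), nx ≤ k →
      εs * q θ ≤ ∫ ω, ∑ j, (∑ i, θ i *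
        ((A i).mulVec (x k ω) + (B i).mulVec (u k ω)) j) ^ 2 ∂μ := by
    intro θ k hk
    set Cs : ℕ → Matrix (Fin nx) (Fin nu) ℝ :=
      fun jj => if jj = k then Nf θ else Mf θ * (AK ^ (k - 1 - jj) * Bθ) with hCs
    set Cw : ℕ → Matrix (Fin nx) (Fin nw) ℝ :=
      fun jj => Mf θ * (AK ^ (k - 1 - jj) * F) with hCw
    set g : (ℕ ⊕ ℕ) → Ω → Fin nx → ℝ :=
      fun l ω => Sum.elim (fun jj => (Cs jj).mulVec (s jj ω))
        (fun jj => (Cw jj).mulVec (w jj ω)) l with hgdef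
    set L : Finset (ℕ ⊕ ℕ) :=
      ((Finset.range (k+1)).image Sum.inl) ∪ ((Finset.range k).image Sum.inr) with hL
    set v : Fin nx → ℝ := (Mf θ * AK ^ k).mulVec x0 with hv
    -- split the sum over L
    have hdisj : Disjoint ((Finset.range (k+1)).image (Sum.inl : ℕ → ℕ ⊕ ℕ))
        ((Finset.range k).image (Sum.inr : ℕ → ℕ ⊕ ℕ)) := by
      simp [Finset.disjoint_left]
    have hsum : ∀ ω, ∑ l ∈ L, g l ω
        = (∑ jj ∈ Finset.range (k+1), (Cs jj).mulVec (s jj ω))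
          + (∑ jj ∈ Finset.range k, (Cw jj).mulVec (w jj ω)) := by
      intro ω
      rw [hL, Finset.sum_union hdisj,
        Finset.sum_image (by intro a _ b _ h; exact Sum.inl.inj h),
        Finset.sum_image (by intro a _ b _ h; exact Sum.inr.inj h)]
      rfl
    -- pointwise identity for the regressor
    have hYfun : ∀ ω, (Mf θ).mulVec (x k ω) + (Nf θ).mulVec (s k ω)
        = v + ∑ l ∈ L, g l ω := by
      intro ω
      rw [hsum ω, hxdec k ω, Matrix.mulVec_add, mulVec_sumVec, Matrix.mulVec_mulVec,
        Finset.sum_range_succ]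
      have e1 : Cs k = Nf θ := by rw [hCs]; simp
      have e2 : ∀ jj ∈ Finset.range k,
          (Mf θ).mulVec ((AK ^ (k - 1 - jj) * Bθ).mulVec (s jj ω)
              + (AK ^ (k - 1 - jj) * F).mulVec (w jj ω))
          = (Cs jj).mulVec (s jj ω) + (Cw jj).mulVec (w jj ω) := by
        intro jj hjj
        rw [Finset.mem_range] at hjj
        rw [Matrix.mulVec_add, Matrix.mulVec_mulVec, Matrix.mulVec_mulVec,
          hCs, hCw]
        simp only [if_neg (by omega : jj ≠ k)]
      rw [Finset.sum_congr rfl e2, e1, Finset.sum_add_distrib]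
      abel
    have hY : ∀ ω (j : Fin nx),
        ∑ i, θ i * ((A i).mulVec (x k ω) + (B i).mulVec (u k ω)) j
          = v j + ∑ l ∈ L, g l ω j := by
      intro ω j
      have h0 := congrFun (lin1 θ (x k ω) (s k ω)) j
      rw [hu k ω, ← h0, hYfun ω]
      simp [Finset.sum_apply]
    -- L² and mean/orthogonality facts
    have hgL2 : ∀ l, ∀ j, MemLp (fun ω => g l ω j) 2 μ := by
      intro l j
      rcases l with jj | jj
      · exact myMemL2MulVec (Cs jj) (fun ω => s jj ω) (fun i => hsL2 jj i) j
      · exact myMemL2MulVec (Cw jj) (fun ω => w jj ω) (fun i => hwL2 jj i) j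
    have hgmean : ∀ l, ∀ j : Fin nx, ∫ ω, g l ω j ∂μ = 0 := by
      intro l j
      rcases l with jj | jj
      · exact myMeanZeroMulVec (Cs jj) _ (fun i => hsL2 jj i) (fun i => hsmean jj i) j
      · exact myMeanZeroMulVec (Cw jj) _ (fun i => hwL2 jj i) (fun i => hwmean jj i) j
    have hgorth : ∀ l l', l ≠ l' → ∀ j : Fin nx,
        ∫ ω, g l ω j * g l' ω j ∂μ = 0 := by
      intro l l' hne j
      rcases l with jj | jj <;> rcases l' with jj' | jj'
      · have hjj : jj ≠ jj' := fun h => hne (by rw [h])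
        exact myOrthMulVec (Cs jj) (Cs jj') _ _ (fun i => hsL2 jj i) (fun i => hsL2 jj' i)
          (fun i => hsmean jj i)
          (fun i i' => (hss jj jj' hjj).comp (measurable_pi_apply i) (measurable_pi_apply i')) j j
      · exact myOrthMulVec (Cs jj) (Cw jj') _ _ (fun i => hsL2 jj i) (fun i => hwL2 jj' i)
          (fun i => hsmean jj i)
          (fun i i' => (hsw jj jj').comp (measurable_pi_apply i) (measurable_pi_apply i')) j j
      · exact myOrthMulVec (Cw jj) (Cs jj') _ _ (fun i => hwL2 jj i) (fun i => hsL2 jj' i)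
          (fun i => hwmean jj i)
          (fun i i' => ((hsw jj' jj).symm).comp (measurable_pi_apply i) (measurable_pi_apply i')) j j
      · have hjj : jj ≠ jj' := fun h => hne (by rw [h])
        exact myOrthMulVec (Cw jj) (Cw jj') _ _ (fun i => hwL2 jj i) (fun i => hwL2 jj' i)
          (fun i => hwmean jj i)
          (fun i i' => (hww jj jj' hjj).comp (measurable_pi_apply i) (measurable_pi_apply i')) j j
    -- expansion per component
    have hcomp : ∀ j : Fin nx, ∫ ω, (v j + ∑ l ∈ L, g l ω j) ^ 2 ∂μ
        = (v j) ^ 2 + ∑ l ∈ L, ∫ ω, (g l ω j) ^ 2 ∂μ :=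
      fun j => myExpandSq L (v j) (fun l ω => g l ω j)
        (fun l _ => hgL2 l j) (fun l _ => hgmean l j) (fun l _ l' _ h => hgorth l l' h j)
    -- rewrite and swap integral with the finite sum over components
    have hint : ∀ j : Fin nx, Integrable (fun ω => (v j + ∑ l ∈ L, g l ω j) ^ 2) μ := by
      intro j
      have hm : MemLp (fun ω => v j + ∑ l ∈ L, g l ω j) 2 μ := by
        have h1 : MemLp (fun _ : Ω => v j) 2 μ := memLp_const _
        have h2 : MemLp (fun ω => ∑ l ∈ L, g l ω j) 2 μ := by
          have := memLp_finset_sum (s := L) (f := fun l ω => g l ω j) 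
            (fun l _ => hgL2 l j)
          simpa using this
        exact h1.add h2
      exact hm.integrable_sq
    have hEq : ∫ ω, ∑ j, (∑ i, θ i *
          ((A i).mulVec (x k ω) + (B i).mulVec (u k ω)) j) ^ 2 ∂μ
        = ∑ j, ∫ ω, (v j + ∑ l ∈ L, g l ω j) ^ 2 ∂μ := by
      rw [show (fun ω => ∑ j, (∑ i, θ i *
          ((A i).mulVec (x k ω) + (B i).mulVec (u k ω)) j) ^ 2)
          = fun ω => ∑ j, (v j + ∑ l ∈ L, g l ω j) ^ 2 by
        funext ω; exact Finset.sum_congr rfl fun j _ => by rw [hY ω j]]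
      exact integral_finset_sum _ (fun j _ => hint j)
    rw [hEq]
    -- reorganize the double sum
    have hre : ∑ j, ∫ ω, (v j + ∑ l ∈ L, g l ω j) ^ 2 ∂μ
        = (∑ j, (v j) ^ 2) + ∑ l ∈ L, ∑ j, ∫ ω, (g l ω j) ^ 2 ∂μ := by
      rw [Finset.sum_congr rfl fun j _ => hcomp j, Finset.sum_add_distrib]
      rw [Finset.sum_comm]
    rw [hre]
    -- lower bounds via the excitation hypothesis
    have hIs : ∀ jj, εs * frobSq (Cs jj) ≤ ∑ j, ∫ ω, ((Cs jj).mulVec (s jj ω) j) ^ 2 ∂μ := by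
      intro jj
      rw [frobSq, Finset.mul_sum]
      refine Finset.sum_le_sum fun j _ => ?_
      have := hsvar jj ((Cs jj) j)
      exact this
    have hInn : ∀ l, 0 ≤ ∑ j, ∫ ω, (g l ω j) ^ 2 ∂μ :=
      fun l => Finset.sum_nonneg fun j _ => integral_nonneg fun ω => sq_nonneg _
    -- the selected subset of indices
    set L' : Finset (ℕ ⊕ ℕ) := insert (Sum.inl k)
      ((Finset.range nx).image (fun d => Sum.inl (k - 1 - d))) with hL'
    have hsubset : L' ⊆ L := by
      intro l hl
      rw [hL'] at hl
      rcases Finset.mem_insert.1 hl with h | h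
      · subst h
        exact Finset.mem_union_left _ (Finset.mem_image_of_mem _ (by simp))
      · obtain ⟨d, hd, rfl⟩ := Finset.mem_image.1 h
        rw [Finset.mem_range] at hd
        exact Finset.mem_union_left _ (Finset.mem_image_of_mem _
          (Finset.mem_range.2 (by omega)))
    have hmono : ∑ l ∈ L', ∑ j, ∫ ω, (g l ω j) ^ 2 ∂μ
        ≤ ∑ l ∈ L, ∑ j, ∫ ω, (g l ω j) ^ 2 ∂μ :=
      Finset.sum_le_sum_of_subset_of_nonneg hsubset (fun l _ _ => hInn l)
    have hnotmem : (Sum.inl k : ℕ ⊕ ℕ) ∉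
        (Finset.range nx).image (fun d => Sum.inl (k - 1 - d)) := by
      intro h
      obtain ⟨d, hd, hde⟩ := Finset.mem_image.1 h
      rw [Finset.mem_range] at hd
      have := Sum.inl.inj hde
      omega
    have hinj : ∀ d1 ∈ Finset.range nx, ∀ d2 ∈ Finset.range nx,
        (fun d => (Sum.inl (k - 1 - d) : ℕ ⊕ ℕ)) d1 = (fun d => Sum.inl (k - 1 - d)) d2
        → d1 = d2 := by
      intro d1 h1 d2 h2 h
      rw [Finset.mem_range] at h1 h2
      have := Sum.inl.inj h
      omega
    have hLsplit : ∑ l ∈ L', ∑ j, ∫ ω, (g l ω j) ^ 2 ∂μ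
        = (∑ j, ∫ ω, (g (Sum.inl k) ω j) ^ 2 ∂μ)
          + ∑ d ∈ Finset.range nx, ∑ j, ∫ ω, (g (Sum.inl (k - 1 - d)) ω j) ^ 2 ∂μ := by
      rw [hL', Finset.sum_insert hnotmem, Finset.sum_image hinj]
    have hterm1 : εs * frobSq (Nf θ) ≤ ∑ j, ∫ ω, (g (Sum.inl k) ω j) ^ 2 ∂μ := by
      have e1 : Cs k = Nf θ := by rw [hCs]; simp
      rw [← e1]
      exact hIs k
    have hterm2 : ∀ d ∈ Finset.range nx,
        εs * frobSq (Mf θ * (AK ^ d * Bθ))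
          ≤ ∑ j, ∫ ω, (g (Sum.inl (k - 1 - d)) ω j) ^ 2 ∂μ := by
      intro d hd
      rw [Finset.mem_range] at hd
      have h1 := hIs (k - 1 - d)
      have hd2 : k - 1 - (k - 1 - d) = d := by omega
      have e1 : Cs (k - 1 - d) = Mf θ * (AK ^ d * Bθ) := by
        rw [hCs]
        simp only [if_neg (show ¬(k - 1 - d = k) by omega)]
        rw [hd2]
      rw [← e1]
      exact hIs (k - 1 - d)
    have hfinal : εs * q θ ≤ (∑ j, ∫ ω, (g (Sum.inl k) ω j) ^ 2 ∂μ)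
        + ∑ d ∈ Finset.range nx, ∑ j, ∫ ω, (g (Sum.inl (k - 1 - d)) ω j) ^ 2 ∂μ := by
      rw [hqdef]
      simp only [mul_add, Finset.mul_sum]
      exact add_le_add hterm1 (Finset.sum_le_sum hterm2)
    calc εs * q θ ≤ _ := hfinal
      _ = ∑ l ∈ L', ∑ j, ∫ ω, (g l ω j) ^ 2 ∂μ := hLsplit.symm
      _ ≤ ∑ l ∈ L, ∑ j, ∫ ω, (g l ω j) ^ 2 ∂μ := hmono
      _ ≤ (∑ j, (v j) ^ 2) + ∑ l ∈ L, ∑ j, ∫ ω, (g l ω j) ^ 2 ∂μ := by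
          have : (0:ℝ) ≤ ∑ j, (v j) ^ 2 := Finset.sum_nonneg fun j _ => sq_nonneg _
          linarith
  -- positivity of q away from zero
  have hqpos : ∀ θ : Fin p → ℝ, θ ≠ 0 → 0 < q θ := by
    intro θ hθ
    by_contra hle
    have h0 : 0 ≤ q θ := by
      simp only [hqdef]
      exact add_nonneg (frobSq_nonneg _) (Finset.sum_nonneg fun d _ => frobSq_nonneg _)
    have hq0 : q θ = 0 := le_antisymm (not_lt.1 hle) h0
    simp only [hqdef] at hq0
    have hsum0 : (0:ℝ) ≤ ∑ d ∈ Finset.range nx, frobSq (Mf θ * (AK ^ d * Bθ)) :=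
      Finset.sum_nonneg fun d _ => frobSq_nonneg _
    have h1 : frobSq (Nf θ) = 0 := by
      have := frobSq_nonneg (Nf θ)
      linarith
    have h2 : ∑ d ∈ Finset.range nx, frobSq (Mf θ * (AK ^ d * Bθ)) = 0 := by
      have := frobSq_nonneg (Nf θ)
      linarith
    have hNz : Nf θ = 0 := frobSq_eq_zero h1
    have hMd : ∀ d ∈ Finset.range nx, frobSq (Mf θ * (AK ^ d * Bθ)) = 0 :=
      (Finset.sum_eq_zero_iff_of_nonneg (fun d _ => frobSq_nonneg _)).1 h2
    have hMABd : ∀ d : Fin nx, Mf θ * (AK ^ (d:ℕ) * Bθ) = 0 := fun d =>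
      frobSq_eq_zero (hMd (d:ℕ) (Finset.mem_range.2 d.isLt))
    have hMz : Mf θ = 0 := by
      have hrows : ∀ i0 : Fin nx, (fun l => Mf θ i0 l) = 0 := by
        intro i0
        apply myFullRank (Matrix.of fun (i : Fin nx) (jk : Fin nx × Fin nu) =>
          (AK ^ (jk.1 : ℕ) * Bθ) i jk.2) (by rw [Fintype.card_fin]; exact hreach)
        funext jk
        have e1 : (Matrix.of fun (i : Fin nx) (jk : Fin nx × Fin nu) =>
            (AK ^ (jk.1 : ℕ) * Bθ) i jk.2)ᵀ.mulVec (fun l => Mf θ i0 l) jk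
            = (Mf θ * (AK ^ ((jk.1 : Fin nx) : ℕ) * Bθ)) i0 jk.2 := by
          simp only [Matrix.mulVec, dotProduct, Matrix.transpose_apply, Matrix.of_apply,
            Matrix.mul_apply]
          exact Finset.sum_congr rfl fun l _ => mul_comm _ _
        rw [e1, hMABd jk.1]
        rfl
      ext i0 l
      exact congrFun (hrows i0) l
    have hcomb : ∑ i, θ i • Matrix.fromCols (A i + B i * K) (B i) = 0 := by
      ext i0 c
      rcases c with j | j
      · have h2 := congrFun (congrFun hMz i0) j
        simp only [hMf, Matrix.sum_apply, Matrix.smul_apply, smul_eq_mul,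
          Matrix.zero_apply] at h2 ⊢
        simpa [Matrix.fromCols] using h2
      · have h2 := congrFun (congrFun hNz i0) j
        simp only [hNf, Matrix.sum_apply, Matrix.smul_apply, smul_eq_mul,
          Matrix.zero_apply] at h2 ⊢
        simpa [Matrix.fromCols] using h2
    exact hθ (hli θ hcomb)
  -- homogeneity of q
  have hscale : ∀ (r : ℝ) (θ : Fin p → ℝ), q (r • θ) = r ^ 2 * q θ := by
    intro r θ
    have h1 : Nf (r • θ) = r • Nf θ := by
      show (∑ i, (r • θ) i • B i) = r • ∑ i, θ i • B i
      rw [Finset.smul_sum]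
      exact Finset.sum_congr rfl fun i _ => by
        simp [Pi.smul_apply, smul_smul]
    have h2 : Mf (r • θ) = r • Mf θ := by
      show (∑ i, (r • θ) i • (A i + B i * K)) = r • ∑ i, θ i • (A i + B i * K)
      rw [Finset.smul_sum]
      exact Finset.sum_congr rfl fun i _ => by
        simp [Pi.smul_apply, smul_smul]
    simp only [hqdef, h1, h2, Matrix.smul_mul, frobSq_smul, Finset.mul_sum, mul_add]
  -- minimum of q on the unit sphere
  obtain ⟨c, hc, hcmin⟩ : ∃ c > (0:ℝ), ∀ θ : Fin p → ℝ, θ ⬝ᵥ θ = 1 → c ≤ q θ := by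
    have hqc : Continuous q := by
      simp only [hqdef, hMf, hNf]
      apply Continuous.add
      · exact cont_frobSq_sum B
      · apply continuous_finset_sum
        intro d _
        have h := cont_frobSq_sum (fun i => (A i + B i * K) * (AK ^ d * Bθ))
        have e : ∀ θ : Fin p → ℝ, (∑ i, θ i • ((A i + B i * K) * (AK ^ d * Bθ)))
            = (∑ i, θ i • (A i + B i * K)) * (AK ^ d * Bθ) := by
          intro θ
          rw [Matrix.sum_mul]
          exact Finset.sum_congr rfl fun i _ => (Matrix.smul_mul _ _ _).symm
        simpa only [e] using h
    have hdot : Continuous fun θ : Fin p → ℝ => θ ⬝ᵥ θ := by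
      unfold dotProduct
      fun_prop
    have hclosed : IsClosed {θ : Fin p → ℝ | θ ⬝ᵥ θ = 1} :=
      isClosed_eq hdot continuous_const
    have hbdd : {θ : Fin p → ℝ | θ ⬝ᵥ θ = 1} ⊆ Metric.closedBall 0 1 := by
      intro θ hθ
      rw [Metric.mem_closedBall, dist_zero_right]
      rw [pi_norm_le_iff_of_nonneg zero_le_one]
      intro i
      rw [Real.norm_eq_abs]
      refine abs_le_one_iff_mul_self_le_one.2 ?_
      calc θ i * θ i ≤ ∑ j, θ j * θ j :=
            Finset.single_le_sum (f := fun j => θ j * θ j)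
              (fun j _ => mul_self_nonneg _) (Finset.mem_univ i)
        _ = 1 := hθ
    have hcompact : IsCompact {θ : Fin p → ℝ | θ ⬝ᵥ θ = 1} :=
      Metric.isCompact_of_isClosed_isBounded hclosed
        (Bornology.IsBounded.subset (Metric.isBounded_closedBall) hbdd)
    have hne : ({θ : Fin p → ℝ | θ ⬝ᵥ θ = 1}).Nonempty := by
      refine ⟨fun j => if j = ⟨0, hp⟩ then 1 else 0, ?_⟩
      show ∑ j, _ = 1
      rw [Finset.sum_eq_single ⟨0, hp⟩]
      · simp
      · intro b _ hb; simp [hb]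
      · intro h; exact absurd (Finset.mem_univ _) h
    obtain ⟨θ0, hθ0, hmin⟩ := hcompact.exists_isMinOn hne hqc.continuousOn
    have hθ0ne : θ0 ≠ 0 := by
      intro h
      rw [Set.mem_setOf_eq, h] at hθ0
      simp [dotProduct] at hθ0
    exact ⟨q θ0, hqpos θ0 hθ0ne, fun θ hθ => isMinOn_iff.1 hmin θ hθ⟩
  refine ⟨εs * c, mul_pos hεs hc, ?_⟩
  intro t θ
  by_cases hθ : θ = 0
  · subst hθ
    simp only [zero_dotProduct, dotProduct_zero, mul_zero]
    exact Finset.sum_nonneg fun k _ => hnn 0 k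
  · -- scale to the unit sphere
    have hdp : 0 < θ ⬝ᵥ θ := by
      have hex : ∃ i, θ i ≠ 0 := by
        by_contra h
        push_neg at h
        exact hθ (funext h)
      obtain ⟨i, hi⟩ := hex
      exact Finset.sum_pos' (fun j _ => mul_self_nonneg _)
        ⟨i, Finset.mem_univ i, mul_self_pos.2 hi⟩
    have hqθ : εs * c * (θ ⬝ᵥ θ) ≤ εs * q θ := by
      set r : ℝ := Real.sqrt (θ ⬝ᵥ θ) with hrdef
      have hr : 0 < r := Real.sqrt_pos.2 hdp
      have hr2 : r ^ 2 = θ ⬝ᵥ θ := Real.sq_sqrt hdp.le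
      have hθ1 : (r⁻¹ • θ) ⬝ᵥ (r⁻¹ • θ) = 1 := by
        rw [smul_dotProduct, dotProduct_smul, smul_eq_mul, smul_eq_mul, ← hr2]
        field_simp
      have h1 : c ≤ q (r⁻¹ • θ) := hcmin _ hθ1
      have h2 : q θ = r ^ 2 * q (r⁻¹ • θ) := by
        rw [← hscale r (r⁻¹ • θ), smul_smul, mul_inv_cancel₀ hr.ne', one_smul]
      calc εs * c * (θ ⬝ᵥ θ) = εs * ((θ ⬝ᵥ θ) * c) := by ring
        _ ≤ εs * ((θ ⬝ᵥ θ) * q (r⁻¹ • θ)) :=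
            mul_le_mul_of_nonneg_left (mul_le_mul_of_nonneg_left h1 hdp.le) hεs.le
        _ = εs * q θ := by rw [h2, ← hr2]
    -- single out the last time index
    have hmem : t + Nu - 1 ∈ Finset.Ico t (t + Nu) := by
      refine Finset.mem_Ico.2 ⟨by omega, by omega⟩
    have h1 := Finset.single_le_sum (f := fun k => ∫ ω, ∑ j, (∑ i, θ i *
        ((A i).mulVec (x k ω) + (B i).mulVec (u k ω)) j) ^ 2 ∂μ)
      (fun k _ => hnn θ k) hmem
    have h2 := hkey θ (t + Nu - 1) (by omega)
    calc εs * c * (θ ⬝ᵥ θ) ≤ εs * q θ := hqθ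
      _ ≤ _ := le_trans h2 h1
end

section
/- Let P be an n×n real symmetric positive definite matrix and let A_1, …, A_m be n×n real matrices satisfying the strict Lyapunov LMIs P − A_jᵀ P A_j ≻ 0 for every j = 1, …, m. Then for every matrix A in the convex hull of {A_1, …, A_m} (i.e. A = ∑_j λ_j A_j with λ_j ≥ 0, ∑_j λ_j = 1), one has P − Aᵀ P A ≻ 0. -/
open Matrix Finset

section Aux

variable {n : ℕ} (P : Matrix (Fin n) (Fin n) ℝ)

/-- Cauchy–Schwarz for the quadratic form of a symmetric PSD matrix. -/
lemma psd_cauchy_schwarz (hPsymm : P.IsSymm) (hP : P.PosSemidef)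
    (x y : Fin n → ℝ) :
    (x ⬝ᵥ P *ᵥ y) ^ 2 ≤ (x ⬝ᵥ P *ᵥ x) * (y ⬝ᵥ P *ᵥ y) := by
  have hsym : ∀ u v : Fin n → ℝ, u ⬝ᵥ P *ᵥ v = v ⬝ᵥ P *ᵥ u := by
    intro u v
    rw [Matrix.dotProduct_mulVec, ← Matrix.mulVec_transpose, hPsymm.eq,
      dotProduct_comm]
  have key : ∀ t : ℝ,
      0 ≤ (y ⬝ᵥ P *ᵥ y) * (t * t) + (2 * (x ⬝ᵥ P *ᵥ y)) * t + (x ⬝ᵥ P *ᵥ x) := by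
    intro t
    have h0 := hP.dotProduct_mulVec_nonneg (x + t • y)
    simp only [star_trivial] at h0
    have hexp : (x + t • y) ⬝ᵥ P *ᵥ (x + t • y)
        = (y ⬝ᵥ P *ᵥ y) * (t * t) + (2 * (x ⬝ᵥ P *ᵥ y)) * t + (x ⬝ᵥ P *ᵥ x) := by
      rw [Matrix.mulVec_add, Matrix.mulVec_smul, dotProduct_add, add_dotProduct,
        add_dotProduct, dotProduct_smul, smul_dotProduct, smul_dotProduct,
        dotProduct_smul, hsym y x]
      simp only [smul_eq_mul]
      ring
    rw [hexp] at h0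
    exact h0
  have hd := discrim_le_zero key
  rw [discrim] at hd
  nlinarith [hd]

lemma dotProduct_sum' {ι : Type*} (s : Finset ι) (u : Fin n → ℝ)
    (v : ι → Fin n → ℝ) : u ⬝ᵥ (∑ j ∈ s, v j) = ∑ j ∈ s, u ⬝ᵥ v j := by
  simp only [dotProduct, Finset.sum_apply, Finset.mul_sum]
  exact Finset.sum_comm

lemma sum_dotProduct' {ι : Type*} (s : Finset ι) (u : Fin n → ℝ)
    (v : ι → Fin n → ℝ) : (∑ j ∈ s, v j) ⬝ᵥ u = ∑ j ∈ s, v j ⬝ᵥ u := by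
  simp only [dotProduct, Finset.sum_apply, Finset.sum_mul]
  exact Finset.sum_comm

lemma mulVec_sum' {ι : Type*} (s : Finset ι) (B : Matrix (Fin n) (Fin n) ℝ)
    (v : ι → Fin n → ℝ) : B *ᵥ (∑ j ∈ s, v j) = ∑ j ∈ s, B *ᵥ v j := by
  classical
  induction s using Finset.induction with
  | empty => simp [Matrix.mulVec_zero]
  | insert _ _ h ih => simp [Finset.sum_insert h, Matrix.mulVec_add, ih]

lemma sum_mulVec'_s14 {ι : Type*} (s : Finset ι) (B : ι → Matrix (Fin n) (Fin n) ℝ)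
    (v : Fin n → ℝ) : (∑ j ∈ s, B j) *ᵥ v = ∑ j ∈ s, B j *ᵥ v := by
  classical
  induction s using Finset.induction with
  | empty => simp [Matrix.zero_mulVec]
  | insert _ _ h ih => simp [Finset.sum_insert h, Matrix.add_mulVec, ih]

end Aux

/-- If `P ≻ 0` and the strict Lyapunov LMIs `P − A_jᵀ P A_j ≻ 0` hold for `j = 1, …, m`,
then `P − Aᵀ P A ≻ 0` for every convex combination `A = ∑_j λ_j A_j`. -/
theorem lyapunov_lmi_convex_hull (n m : ℕ)
    (P : Matrix (Fin n) (Fin n) ℝ) (hPsymm : P.IsSymm) (hP : P.PosDef)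
    (A : Fin m → Matrix (Fin n) (Fin n) ℝ)
    (hA : ∀ j, (P - (A j)ᵀ * P * (A j)).PosDef)
    (lam : Fin m → ℝ) (hlam : ∀ j, 0 ≤ lam j) (hsum : ∑ j, lam j = 1) :
    (P - (∑ j, lam j • A j)ᵀ * P * (∑ j, lam j • A j)).PosDef := by
  set M : Matrix (Fin n) (Fin n) ℝ := ∑ j, lam j • A j with hM
  refine posDef_iff_dotProduct_mulVec.2 ⟨?_, ?_⟩
  · -- Hermitian part
    have hPh : Pᵀ = P := hPsymm.eq
    show (P - Mᵀ * P * M)ᴴ = P - Mᵀ * P * M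
    rw [conjTranspose_eq_transpose_of_trivial, transpose_sub, transpose_mul,
      transpose_mul, transpose_transpose, hPh, Matrix.mul_assoc]
  · intro x hx
    simp only [star_trivial]
    -- abbreviations
    set q : (Fin n → ℝ) → ℝ := fun v => v ⬝ᵥ P *ᵥ v with hq
    have hMx : M *ᵥ x = ∑ j, lam j • (A j *ᵥ x) := by
      rw [hM, sum_mulVec'_s14]
      exact Finset.sum_congr rfl fun j _ => by rw [Matrix.smul_mulVec]
    -- quadratic form of target
    have hgoal : x ⬝ᵥ (P - Mᵀ * P * M) *ᵥ x = q x - q (M *ᵥ x) := by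
      rw [Matrix.sub_mulVec, dotProduct_sub]
      congr 1
      rw [← Matrix.mulVec_mulVec, ← Matrix.mulVec_mulVec,
        Matrix.dotProduct_mulVec x (A := Mᵀ), ← Matrix.mulVec_transpose,
        transpose_transpose]
    rw [hgoal]
    -- each vertex quadratic form
    have hvert : ∀ j, q (A j *ᵥ x) < q x := by
      intro j
      have h := (hA j).dotProduct_mulVec_pos hx
      simp only [star_trivial] at h
      have hexp : x ⬝ᵥ (P - (A j)ᵀ * P * A j) *ᵥ x = q x - q (A j *ᵥ x) := by
        rw [Matrix.sub_mulVec, dotProduct_sub]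
        congr 1
        rw [← Matrix.mulVec_mulVec, ← Matrix.mulVec_mulVec,
          Matrix.dotProduct_mulVec x (A := (A j)ᵀ), ← Matrix.mulVec_transpose,
          transpose_transpose]
      rw [hexp] at h
      linarith
    have hqnn : ∀ v, 0 ≤ q v := fun v => by
      have := hP.posSemidef.dotProduct_mulVec_nonneg v
      simpa using this
    -- Jensen: q (M x) ≤ ∑ λ_j q (A_j x)
    have hjensen : q (M *ᵥ x) ≤ ∑ j, lam j * q (A j *ᵥ x) := by
      rw [hMx]
      set y : Fin m → (Fin n → ℝ) := fun j => A j *ᵥ x with hy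
      -- expand the quadratic form
      have hbil : q (∑ j, lam j • y j)
          = ∑ j, ∑ k, (lam j * lam k) * ((y j) ⬝ᵥ P *ᵥ (y k)) := by
        show (∑ j, lam j • y j) ⬝ᵥ P *ᵥ (∑ j, lam j • y j) = _
        rw [mulVec_sum', sum_dotProduct']
        apply Finset.sum_congr rfl; intro j _
        rw [dotProduct_sum']
        apply Finset.sum_congr rfl; intro k _
        rw [Matrix.mulVec_smul, smul_dotProduct, dotProduct_smul]
        simp only [smul_eq_mul]
        ring
      rw [hbil]
      -- Cauchy–Schwarz on each cross term
      set a : Fin m → ℝ := fun j => Real.sqrt (q (y j)) with ha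
      have hstep : ∑ j, ∑ k, (lam j * lam k) * ((y j) ⬝ᵥ P *ᵥ (y k))
          ≤ (∑ j, lam j * a j) ^ 2 := by
        rw [sq, Finset.sum_mul_sum]
        apply Finset.sum_le_sum; intro j _
        apply Finset.sum_le_sum; intro k _
        have hcs := psd_cauchy_schwarz P hPsymm hP.posSemidef (y j) (y k)
        have hb : (y j) ⬝ᵥ P *ᵥ (y k) ≤ a j * a k := by
          have h1 : a j * a k = Real.sqrt (q (y j) * q (y k)) := by
            rw [ha, Real.sqrt_mul (hqnn _)]
          rw [h1]
          have h2 : (y j) ⬝ᵥ P *ᵥ (y k) ≤ |(y j) ⬝ᵥ P *ᵥ (y k)| := le_abs_self _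
          refine h2.trans ?_
          rw [← Real.sqrt_sq_eq_abs]
          exact Real.sqrt_le_sqrt (by nlinarith [hcs])
        have := mul_le_mul_of_nonneg_left hb (mul_nonneg (hlam j) (hlam k))
        calc (lam j * lam k) * ((y j) ⬝ᵥ P *ᵥ (y k))
            ≤ (lam j * lam k) * (a j * a k) := this
          _ = lam j * a j * (lam k * a k) := by ring
      refine hstep.trans ?_
      -- (∑ λ a)² ≤ (∑ λ) (∑ λ a²) = ∑ λ q
      have hCS2 := Finset.sum_sq_le_sum_mul_sum_of_sq_eq_mul Finset.univ
        (r := fun j => lam j * a j) (f := fun j => lam j)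
        (g := fun j => lam j * q (y j))
        (fun j _ => hlam j) (fun j _ => mul_nonneg (hlam j) (hqnn _))
        (fun j _ => by
          have h : a j ^ 2 = q (y j) := Real.sq_sqrt (hqnn _)
          rw [mul_pow, h]; ring)
      rw [hsum, one_mul] at hCS2
      exact hCS2
    -- strictness: need ∃ j with lam j > 0
    have hex : ∃ j, 0 < lam j := by
      by_contra h
      push_neg at h
      have : ∑ j, lam j = 0 := Finset.sum_eq_zero fun j _ => le_antisymm (h j) (hlam j)
      rw [hsum] at this; norm_num at this
    obtain ⟨j0, hj0⟩ := hex
    have hstrict : ∑ j, lam j * q (A j *ᵥ x) < q x := by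
      have h1 : ∑ j, lam j * q (A j *ᵥ x) < ∑ j, lam j * q x := by
        apply Finset.sum_lt_sum
        · intro j _; exact mul_le_mul_of_nonneg_left (hvert j).le (hlam j)
        · exact ⟨j0, Finset.mem_univ _, by
            exact mul_lt_mul_of_pos_left (hvert j0) hj0⟩
      calc ∑ j, lam j * q (A j *ᵥ x) < ∑ j, lam j * q x := h1
        _ = q x := by rw [← Finset.sum_mul, hsum, one_mul]
    linarith
end
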